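/- arXiv:2509.24324 — 3 statements merged into one kernel-verified Lean document; each statement's English description precedes it below -/
import Mathlib

section
/- For all n ≥ 0, a_4(7n+4) ≡ 0 (mod 7), where a_4(n) is defined by ∑_{n≥0} a_4(n) q^n = (q^2;q^2)_∞^3/(q;q)_∞^4. -/
open PowerSeries Finset

variable {R : Type*} [CommRing R]

/-- Two power series agree in coefficients up to degree `d`. -/
def EqUpTo (d : ℕ) (F G : PowerSeries R) : Prop :=
  ∀ n ≤ d, PowerSeries.coeff n F = PowerSeries.coeff n G

namespace EqUpTo

theorem refl (d : ℕ) (F : PowerSeries R) : EqUpTo d F F := fun _ _ => rfl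

theorem symm {d : ℕ} {F G : PowerSeries R} (h : EqUpTo d F G) : EqUpTo d G F :=
  fun n hn => (h n hn).symm

theorem trans {d : ℕ} {F G H : PowerSeries R} (h1 : EqUpTo d F G) (h2 : EqUpTo d G H) :
    EqUpTo d F H := fun n hn => (h1 n hn).trans (h2 n hn)

theorem add {d : ℕ} {F G F' G' : PowerSeries R} (h : EqUpTo d F G) (h' : EqUpTo d F' G') :
    EqUpTo d (F + F') (G + G') := fun n hn => by
  simp [map_add, h n hn, h' n hn]

theorem mul {d : ℕ} {F G F' G' : PowerSeries R} (h : EqUpTo d F G) (h' : EqUpTo d F' G') :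
    EqUpTo d (F * F') (G * G') := fun n hn => by
  rw [PowerSeries.coeff_mul, PowerSeries.coeff_mul]
  refine Finset.sum_congr rfl fun p hp => ?_
  rw [Finset.HasAntidiagonal.mem_antidiagonal] at hp
  rw [h p.1 (by omega), h' p.2 (by omega)]

theorem pow {d : ℕ} {F G : PowerSeries R} (h : EqUpTo d F G) (k : ℕ) :
    EqUpTo d (F ^ k) (G ^ k) := by
  induction k with
  | zero => simpa using refl d 1
  | succ k ih => rw [pow_succ, pow_succ]; exact ih.mul h

theorem sum {d : ℕ} {ι : Type*} (s : Finset ι) (f g : ι → PowerSeries R)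
    (h : ∀ i ∈ s, EqUpTo d (f i) (g i)) :
    EqUpTo d (∑ i ∈ s, f i) (∑ i ∈ s, g i) := fun n hn => by
  rw [map_sum, map_sum]
  exact Finset.sum_congr rfl fun i hi => h i hi n hn

end EqUpTo

theorem eqUpTo_zero_of_X_pow_dvd {d e : ℕ} (hde : d < e) {F : PowerSeries R}
    (h : X ^ e ∣ F) : EqUpTo d F 0 := fun n hn => by
  rw [map_zero, (PowerSeries.X_pow_dvd_iff.mp h) n (by omega)]

/-- Multiplication by `q^T` shifts the agreement degree. -/
theorem EqUpTo.qpow_mul {d T : ℕ} {q F G : PowerSeries R} (hq : X ∣ q)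
    (h : EqUpTo (d - T) F G) : EqUpTo d (q ^ T * F) (q ^ T * G) := fun n hn => by
  rw [PowerSeries.coeff_mul, PowerSeries.coeff_mul]
  refine Finset.sum_congr rfl fun p hp => ?_
  rw [Finset.HasAntidiagonal.mem_antidiagonal] at hp
  by_cases hT : T ≤ p.1
  · rw [h p.2 (by omega)]
  · rw [PowerSeries.X_pow_dvd_iff.mp (pow_dvd_pow_of_dvd hq T) p.1 (by omega)]
    ring

theorem eqUpTo_one_prod {d : ℕ} {ι : Type*} (s : Finset ι) (e : ι → ℕ)
    (he : ∀ i ∈ s, d < e i) {q : PowerSeries R} (hq : X ∣ q) :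
    EqUpTo d (∏ i ∈ s, (1 - q ^ e i)) 1 := by
  induction s using Finset.cons_induction with
  | empty => simpa using EqUpTo.refl d 1
  | cons a s ha ih =>
    rw [Finset.prod_cons]
    have h1 : EqUpTo d (1 - q ^ e a) 1 := by
      intro n hn
      have := PowerSeries.X_pow_dvd_iff.mp (pow_dvd_pow_of_dvd hq (e a)) n
        (lt_of_le_of_lt hn (he a (Finset.mem_cons_self a s)))
      simp [map_sub, this]
    have := h1.mul (ih fun i hi => he i (Finset.mem_cons_of_mem hi))
    simpa using this

/-- Gaussian binomial coefficient (as a power series in `q`). -/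
noncomputable def gb (q : PowerSeries R) : ℕ → ℕ → PowerSeries R
  | 0, 0 => 1
  | 0, _ + 1 => 0
  | _ + 1, 0 => 1
  | n + 1, k + 1 => gb q n (k + 1) + q ^ (n - k) * gb q n k

variable (q : PowerSeries R)

@[simp] theorem gb_zero_right (n : ℕ) : gb q n 0 = 1 := by cases n <;> rfl

theorem gb_succ_succ (n k : ℕ) :
    gb q (n + 1) (k + 1) = gb q n (k + 1) + q ^ (n - k) * gb q n k := rfl

theorem gb_eq_zero {n k : ℕ} (h : n < k) : gb q n k = 0 := by
  induction n generalizing k with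
  | zero => cases k with | zero => omega | succ k => rfl
  | succ n ih =>
    cases k with
    | zero => omega
    | succ k => rw [gb_succ_succ, ih (by omega), ih (by omega), mul_zero, add_zero]

@[simp] theorem gb_self (n : ℕ) : gb q n n = 1 := by
  induction n with
  | zero => rfl
  | succ n ih => rw [gb_succ_succ, gb_eq_zero q (by omega), ih]; simp

theorem gb_ratio (n k : ℕ) :
    (1 - q ^ (k + 1)) * gb q n (k + 1) = (1 - q ^ (n - k)) * gb q n k := by
  induction n generalizing k with
  | zero =>
    rw [gb_eq_zero q (by omega)]
    simp [Nat.zero_sub]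
  | succ n ih =>
    rcases le_or_gt k n with hk | hk
    · have hpow : q ^ (n - k) * q ^ (k + 1) = q ^ (n + 1) := by
        rw [← pow_add]; congr 1; omega
      have key : (1 - q ^ (k + 1)) * gb q (n + 1) (k + 1) = (1 - q ^ (n + 1)) * gb q n k := by
        rw [gb_succ_succ, mul_add, ih k]
        linear_combination (-(gb q n k)) * hpow
      rw [key]
      cases k with
      | zero => simp
      | succ k' =>
        have hk' : k' < n := by omega
        have hpow2 : q ^ (n - k') * q ^ (k' + 1) = q ^ (n + 1) := by
          rw [← pow_add]; congr 1; omega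
        have hsub : n + 1 - (k' + 1) = n - k' := by omega
        rw [hsub, gb_succ_succ]
        linear_combination q ^ (n - k') * ih k' + gb q n (k' + 1) * hpow2
    · rw [gb_eq_zero q (show n + 1 < k + 1 by omega), mul_zero]
      rcases eq_or_lt_of_le (show n + 1 ≤ k from hk) with he | hlt
      · rw [← he]
        simp
      · rw [gb_eq_zero q hlt, mul_zero]

theorem gb_pascal2 (n k : ℕ) :
    gb q (n + 1) (k + 1) = q ^ (k + 1) * gb q n (k + 1) + gb q n k := by
  rw [gb_succ_succ]
  linear_combination gb_ratio q n k

theorem gb_adj {q : PowerSeries R} (hq : X ∣ q) {d m k : ℕ} (h1 : d < k + 1)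
    (h2 : d < 2 * m - k) : EqUpTo d (gb q (2 * m) (k + 1)) (gb q (2 * m) k) := by
  intro n hn
  have hA : PowerSeries.coeff n (q ^ (k + 1) * gb q (2 * m) (k + 1)) = 0 :=
    eqUpTo_zero_of_X_pow_dvd (lt_of_le_of_lt hn h1)
      ((pow_dvd_pow_of_dvd hq (k + 1)).trans (dvd_mul_right _ _)) n le_rfl |>.trans (by simp)
  have hB : PowerSeries.coeff n (q ^ (2 * m - k) * gb q (2 * m) k) = 0 :=
    eqUpTo_zero_of_X_pow_dvd (lt_of_le_of_lt hn h2)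
      ((pow_dvd_pow_of_dvd hq (2 * m - k)).trans (dvd_mul_right _ _)) n le_rfl |>.trans (by simp)
  have hr := gb_ratio q (2 * m) k
  rw [sub_mul, sub_mul, one_mul, one_mul] at hr
  have := congrArg (PowerSeries.coeff n) hr
  rw [map_sub, map_sub, hA, hB] at this
  simpa using this

theorem gb_mid_lower {q : PowerSeries R} (hq : X ∣ q) {d m : ℕ} :
    ∀ t, d ≤ m - t → EqUpTo d (gb q (2 * m) (m - t)) (gb q (2 * m) m) := by
  intro t
  induction t with
  | zero => intro _; exact EqUpTo.refl d _
  | succ t ih =>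
    intro hd
    rcases le_or_gt m t with h | h
    · rw [show m - (t + 1) = m - t from by omega]; exact ih (by omega)
    · have step : EqUpTo d (gb q (2 * m) (m - t)) (gb q (2 * m) (m - (t + 1))) := by
        rw [show m - t = (m - (t + 1)) + 1 from by omega]
        exact gb_adj hq (by omega) (by omega)
      exact step.symm.trans (ih (by omega))
theorem gb_mid_upper {q : PowerSeries R} (hq : X ∣ q) {d m : ℕ} :
    ∀ t, m + t ≤ 2 * m → d ≤ 2 * m - (m + t) → EqUpTo d (gb q (2 * m) (m + t)) (gb q (2 * m) m) := by
  intro t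
  induction t with
  | zero => intro _ _; exact EqUpTo.refl d _
  | succ t ih =>
    intro ht hd
    have step : EqUpTo d (gb q (2 * m) (m + t + 1)) (gb q (2 * m) (m + t)) :=
      gb_adj hq (by omega) (by omega)
    exact step.trans (ih (by omega) (by omega))

theorem gb_mid {q : PowerSeries R} (hq : X ∣ q) {d m j : ℕ} (hj2 : j ≤ 2 * m)
    (h1 : d ≤ j) (h2 : d ≤ 2 * m - j) :
    EqUpTo d (gb q (2 * m) j) (gb q (2 * m) m) := by
  rcases le_or_gt j m with h | h
  · have : j = m - (m - j) := by omega
    rw [this]; exact gb_mid_lower hq (m - j) (by omega)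
  · have : j = m + (j - m) := by omega
    rw [this]; exact gb_mid_upper hq (j - m) (by omega) (by omega)

theorem gb_mul_prod (n k : ℕ) :
    (∏ i ∈ range k, (1 - q ^ (i + 1))) * gb q n k =
    ∏ i ∈ range k, (1 - q ^ (n + i + 1 - k)) := by
  induction n generalizing k with
  | zero =>
    cases k with
    | zero => simp
    | succ k' =>
      rw [gb_eq_zero q (by omega), mul_zero,
        Finset.prod_eq_zero (Finset.self_mem_range_succ k')
          (show 1 - q ^ (0 + k' + 1 - (k' + 1)) = 0 by
            rw [show 0 + k' + 1 - (k' + 1) = 0 from by omega, pow_zero, sub_self])]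
  | succ n ih =>
    cases k with
    | zero => simp
    | succ k' =>
      rcases le_or_gt k' n with hk | hk
      · have hpow : q ^ (n - k') * q ^ (k' + 1) = q ^ (n + 1) := by
          rw [← pow_add]; congr 1; omega
        have e1 : (∏ i ∈ range (k' + 1), (1 - q ^ (i + 1))) * gb q n (k' + 1) =
            (∏ i ∈ range k', (1 - q ^ (n + i + 1 - k'))) * (1 - q ^ (n - k')) := by
          rw [ih (k' + 1)]
          rw [Finset.prod_range_succ' (fun i => 1 - q ^ (n + i + 1 - (k' + 1))) k']
          congr 1
          · exact Finset.prod_congr rfl fun i _ => by congr 2; omega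
          · congr 2; omega
        have e2 : (∏ i ∈ range k', (1 - q ^ (i + 1))) * gb q n k' =
            ∏ i ∈ range k', (1 - q ^ (n + i + 1 - k')) := ih k'
        rw [gb_succ_succ, mul_add]
        rw [Finset.prod_range_succ (fun i => 1 - q ^ ((n + 1) + i + 1 - (k' + 1)))]
        have etop : (n + 1) + k' + 1 - (k' + 1) = n + 1 := by omega
        rw [show (∏ i ∈ range k', (1 - q ^ ((n + 1) + i + 1 - (k' + 1)))) =
            ∏ i ∈ range k', (1 - q ^ (n + i + 1 - k')) from
          Finset.prod_congr rfl fun i _ => by congr 2; omega, etop]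
        rw [e1]
        rw [Finset.prod_range_succ (fun i => 1 - q ^ (i + 1))]
        calc (∏ i ∈ range k', (1 - q ^ (n + i + 1 - k'))) * (1 - q ^ (n - k')) +
              (∏ i ∈ range k', (1 - q ^ (i + 1))) * (1 - q ^ (k' + 1)) *
                (q ^ (n - k') * gb q n k')
            = (∏ i ∈ range k', (1 - q ^ (n + i + 1 - k'))) * (1 - q ^ (n - k')) +
              q ^ (n - k') * (1 - q ^ (k' + 1)) *
                ((∏ i ∈ range k', (1 - q ^ (i + 1))) * gb q n k') := by ring
          _ = (∏ i ∈ range k', (1 - q ^ (n + i + 1 - k'))) * (1 - q ^ (n + 1)) := by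
              rw [e2]; linear_combination (-(∏ i ∈ range k', (1 - q ^ (n + i + 1 - k')))) * hpow
      · rw [gb_eq_zero q (by omega), mul_zero,
          Finset.prod_eq_zero (show k' - n - 1 + 1 - 1 ∈ range (k' + 1) from by
            simp; omega)
          (show 1 - q ^ ((n + 1) + (k' - n - 1 + 1 - 1) + 1 - (k' + 1)) = 0 by
            rw [show (n + 1) + (k' - n - 1 + 1 - 1) + 1 - (k' + 1) = 0 from by omega,
              pow_zero, sub_self])]

def triangle : ℕ → ℕ
  | 0 => 0
  | t + 1 => triangle t + t + 1

@[simp] theorem triangle_zero : triangle 0 = 0 := rfl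
theorem triangle_succ (t : ℕ) : triangle (t + 1) = triangle t + t + 1 := rfl

theorem le_triangle_succ (t : ℕ) : t ≤ triangle t + 1 := by
  induction t with
  | zero => simp
  | succ t ih => rw [triangle_succ]; omega

theorem self_le_triangle (t : ℕ) : t ≤ triangle t := by
  cases t with
  | zero => simp
  | succ t => rw [triangle_succ]; have := le_triangle_succ t; omega

/-- Exponent of `q` in the `j`-th coefficient of the finite triple product with center `m`. -/
def tOf (m j : ℕ) : ℕ := if m ≤ j then triangle (j - m) else triangle (m - j - 1)

theorem tOf_id1 (m j : ℕ) : m + tOf m j = tOf (m + 1) j + j := by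
  unfold tOf
  rcases le_or_gt m j with h | h
  · rcases eq_or_lt_of_le h with rfl | hlt
    · simp
    · rw [if_pos h, if_pos (by omega), show j - m = (j - (m + 1)) + 1 from by omega,
        triangle_succ]
      omega
  · rw [if_neg (by omega), if_neg (by omega),
      show m + 1 - j - 1 = (m - j - 1) + 1 from by omega, triangle_succ]
    omega

theorem tOf_mid (m j : ℕ) (h : 1 ≤ j) : tOf m (j - 1) = tOf (m + 1) j := by
  unfold tOf
  rcases le_or_gt m (j - 1) with h1 | h1
  · rw [if_pos h1, if_pos (by omega), show j - 1 - m = j - (m + 1) from by omega]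
  · rw [if_neg (by omega), if_neg (by omega),
      show m - (j - 1) - 1 = m + 1 - j - 1 from by omega]

theorem tOf_id2 (m j : ℕ) (h2 : 2 ≤ j) (h : j ≤ 2 * m + 2) :
    tOf m (j - 2) + (m + 1) = tOf (m + 1) j + (2 * m + 2 - j) := by
  unfold tOf
  rcases le_or_gt (m + 2) j with h1 | h1
  · rw [if_pos (by omega), if_pos (by omega),
      show j - (m + 1) = (j - 2 - m) + 1 from by omega, triangle_succ]
    omega
  · rcases eq_or_lt_of_le (show j ≤ m + 1 from by omega) with rfl | hlt
    · rw [if_neg (by omega), if_pos (by omega),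
        show m - (m + 1 - 2) - 1 = 0 from by omega, show m + 1 - (m + 1) = 0 from by omega]
      simp; omega
    · rw [if_neg (by omega), if_neg (by omega),
        show m - (j - 2) - 1 = (m + 1 - j - 1) + 1 from by omega, triangle_succ]
      omega

theorem gb_row1 (n : ℕ) : gb q (n + 2) 1 = q * gb q n 1 + (1 + q ^ (n + 1)) := by
  have h1 : gb q (n + 2) 1 = gb q (n + 1) 1 + q ^ (n + 1) := by
    rw [gb_succ_succ]; simp
  have h2 : gb q (n + 1) 1 = gb q n 1 + q ^ n := by
    rw [gb_succ_succ]; simp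
  have hr := gb_ratio q n 0
  simp only [Nat.sub_zero, pow_one, gb_zero_right, mul_one] at hr
  rw [h1, h2]
  linear_combination hr

theorem gb_star (m j : ℕ) (hj : 2 ≤ j) :
    gb q (2 * m + 2) j = q ^ j * gb q (2 * m) j + (1 + q ^ (2 * m + 1)) * gb q (2 * m) (j - 1)
      + q ^ (2 * m + 2 - j) * gb q (2 * m) (j - 2) := by
  obtain ⟨j', rfl⟩ : ∃ j', j = j' + 2 := ⟨j - 2, by omega⟩
  simp only [show j' + 2 - 1 = j' + 1 from rfl, Nat.add_sub_cancel]
  rcases le_or_gt (j' + 2) (2 * m + 1) with h | h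
  · have hpow : q ^ (j' + 2) * q ^ (2 * m - (j' + 1)) = q ^ (2 * m + 1) := by
      rw [← pow_add]; congr 1; omega
    have e1 : gb q (2 * m + 2) (j' + 2) =
        q ^ (j' + 2) * gb q (2 * m + 1) (j' + 2) + gb q (2 * m + 1) (j' + 1) :=
      gb_pascal2 q (2 * m + 1) (j' + 1)
    have e2 : gb q (2 * m + 1) (j' + 2) =
        gb q (2 * m) (j' + 2) + q ^ (2 * m - (j' + 1)) * gb q (2 * m) (j' + 1) :=
      gb_succ_succ q (2 * m) (j' + 1)
    have e3 : gb q (2 * m + 1) (j' + 1) =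
        gb q (2 * m) (j' + 1) + q ^ (2 * m - j') * gb q (2 * m) j' :=
      gb_succ_succ q (2 * m) j'
    have hsub : 2 * m + 2 - (j' + 2) = 2 * m - j' := by omega
    rw [e1, e2, e3, hsub]
    linear_combination gb q (2 * m) (j' + 1) * hpow
  · rcases eq_or_lt_of_le (show j' + 2 ≥ 2 * m + 2 from by omega) with he | hlt
    · have hj' : j' = 2 * m := by omega
      subst hj'
      rw [gb_self, gb_eq_zero q (show 2 * m < 2 * m + 2 from by omega),
        gb_eq_zero q (show 2 * m < 2 * m + 1 from by omega), Nat.sub_self]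
      simp
    · rw [gb_eq_zero q (by omega), gb_eq_zero q (by omega), gb_eq_zero q (by omega),
        gb_eq_zero q (by omega)]
      simp

/-- Finite two-variable triple product `∏_{i=1}^m (1+q^i Z)(Z+q^{i-1})`. -/
noncomputable def jacF (q : PowerSeries R) (m : ℕ) : Polynomial (PowerSeries R) :=
  ∏ i ∈ range m,
    ((1 + Polynomial.C (q ^ (i + 1)) * Polynomial.X) * (Polynomial.X + Polynomial.C (q ^ i)))

theorem jacF_succ (m : ℕ) : jacF q (m + 1) =
    jacF q m * Polynomial.C (q ^ m)
    + jacF q m * Polynomial.X ^ 1 * Polynomial.C (1 + q ^ (2 * m + 1))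
    + jacF q m * Polynomial.X ^ 2 * Polynomial.C (q ^ (m + 1)) := by
  rw [jacF, Finset.prod_range_succ, ← jacF]
  have hC : (Polynomial.C (1 + q ^ (2 * m + 1)) : Polynomial (PowerSeries R)) =
      1 + Polynomial.C (q ^ (m + 1)) * Polynomial.C (q ^ m) := by
    rw [map_add, map_one, show 2 * m + 1 = (m + 1) + m from by omega, pow_add, map_mul]
  rw [hC]; ring

theorem jacF_coeff (m j : ℕ) : (jacF q m).coeff j = q ^ tOf m j * gb q (2 * m) j := by
  induction m generalizing j with
  | zero =>
    rw [jacF, Finset.range_zero, Finset.prod_empty]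
    cases j with
    | zero => simp [tOf]
    | succ j => rw [Polynomial.coeff_one, gb_eq_zero q (by omega)]; simp
  | succ m ih =>
    rw [jacF_succ]
    simp only [Polynomial.coeff_add, Polynomial.coeff_mul_C, Polynomial.coeff_mul_X_pow', ih]
    rw [show 2 * (m + 1) = 2 * m + 2 from by omega]
    rcases j with _ | j
    · simp only [show ¬((1:ℕ) ≤ 0) from by omega, show ¬((2:ℕ) ≤ 0) from by omega,
        if_false, zero_mul, add_zero, gb_zero_right, mul_one]
      rw [← pow_add]
      congr 1
      have := tOf_id1 m 0
      omega
    rcases j with _ | j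
    · rw [if_pos (show (1:ℕ) ≤ 1 from le_rfl), if_neg (show ¬((2:ℕ) ≤ 1) from by omega)]
      rw [gb_row1 q (2 * m)]
      have p1 : q ^ tOf m 1 * q ^ m = q ^ tOf (m + 1) 1 * q := by
        rw [← pow_add, ← pow_succ]
        congr 1
        have := tOf_id1 m 1
        omega
      have p2 : tOf m 0 = tOf (m + 1) 1 := tOf_mid m 1 (by omega)
      rw [show (1:ℕ) - 1 = 0 from rfl, p2]
      simp only [gb_zero_right, mul_one, zero_mul, add_zero]
      linear_combination gb q (2 * m) 1 * p1
    · rw [if_pos (show (1:ℕ) ≤ j + 2 from by omega), if_pos (show (2:ℕ) ≤ j + 2 from by omega),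
        show j + 2 - 1 = j + 1 from by omega, show j + 2 - 2 = j from by omega,
        gb_star q m (j + 2) (by omega),
        show j + 2 - 1 = j + 1 from by omega, show j + 2 - 2 = j from by omega]
      have p2 : tOf m (j + 1) = tOf (m + 1) (j + 2) := by
        have := tOf_mid m (j + 2) (by omega)
        rwa [show j + 2 - 1 = j + 1 from by omega] at this
      rcases le_or_gt (j + 2) (2 * m + 2) with hle | hgt
      · have p1 : q ^ tOf m (j + 2) * q ^ m = q ^ tOf (m + 1) (j + 2) * q ^ (j + 2) := by
          rw [← pow_add, ← pow_add]
          congr 1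
          have := tOf_id1 m (j + 2)
          omega
        have p3 : q ^ tOf m j * q ^ (m + 1) =
            q ^ tOf (m + 1) (j + 2) * q ^ (2 * m + 2 - (j + 2)) := by
          rw [← pow_add, ← pow_add]
          congr 1
          have := tOf_id2 m (j + 2) (by omega) hle
          rw [show j + 2 - 2 = j from by omega] at this
          omega
        rw [p2]
        linear_combination gb q (2 * m) (j + 2) * p1 + gb q (2 * m) j * p3
      · rw [gb_eq_zero q (show 2 * m < j + 2 from by omega),
          gb_eq_zero q (show 2 * m < j + 1 from by omega),
          gb_eq_zero q (show 2 * m < j from by omega)]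
        ring

theorem jacF_eq_sum (m : ℕ) : jacF q m = ∑ j ∈ range (2 * m + 1),
    Polynomial.C (q ^ tOf m j * gb q (2 * m) j) * Polynomial.X ^ j := by
  apply Polynomial.ext
  intro n
  rw [jacF_coeff, Polynomial.finset_sum_coeff]
  simp only [Polynomial.coeff_C_mul, Polynomial.coeff_X_pow, mul_ite, mul_one, mul_zero]
  rw [Finset.sum_ite_eq (range (2 * m + 1)) n (fun j => q ^ tOf m j * gb q (2 * m) j)]
  rcases le_or_gt n (2 * m) with h | h
  · rw [if_pos (by simp; omega)]
  · rw [if_neg (by simp; omega), gb_eq_zero q (by omega), mul_zero]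

theorem jacF_factor (m : ℕ) : jacF q (m + 1) = (Polynomial.X + 1) *
    ((∏ i ∈ range (m + 1), (1 + Polynomial.C (q ^ (i + 1)) * Polynomial.X)) *
      ∏ i ∈ range m, (Polynomial.X + Polynomial.C (q ^ (i + 1)))) := by
  rw [jacF, Finset.prod_mul_distrib,
    Finset.prod_range_succ' (fun i => Polynomial.X + Polynomial.C (q ^ i)) m]
  rw [pow_zero, map_one]
  ring

theorem eval_deriv_jacF (m : ℕ) :
    Polynomial.eval (-1 : PowerSeries R) (Polynomial.derivative (jacF q (m + 1))) =
    (-1) ^ m * ((∏ i ∈ range (m + 1), (1 - q ^ (i + 1))) * ∏ i ∈ range m, (1 - q ^ (i + 1))) := by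
  rw [jacF_factor]
  simp only [Polynomial.derivative_mul, Polynomial.derivative_add, Polynomial.derivative_X,
    Polynomial.derivative_one, add_zero, one_mul, Polynomial.eval_add, Polynomial.eval_mul,
    Polynomial.eval_X, Polynomial.eval_one, Polynomial.eval_prod, Polynomial.eval_C]
  have hz : (-1 : PowerSeries R) + 1 = 0 := by ring
  rw [hz, zero_mul, add_zero]
  have pa : (∏ i ∈ range (m + 1), ((1:PowerSeries R) + q ^ (i + 1) * (-1))) =
      ∏ i ∈ range (m + 1), (1 - q ^ (i + 1)) :=
    Finset.prod_congr rfl fun i _ => by ring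
  have pb : (∏ i ∈ range m, ((-1 : PowerSeries R) + q ^ (i + 1))) =
      (-1) ^ m * ∏ i ∈ range m, (1 - q ^ (i + 1)) := by
    calc (∏ i ∈ range m, ((-1 : PowerSeries R) + q ^ (i + 1)))
        = ∏ i ∈ range m, ((-1 : PowerSeries R) * (1 - q ^ (i + 1))) :=
          Finset.prod_congr rfl fun i _ => by ring
      _ = (∏ _i ∈ range m, (-1 : PowerSeries R)) * ∏ i ∈ range m, (1 - q ^ (i + 1)) :=
          Finset.prod_mul_distrib
      _ = (-1) ^ m * ∏ i ∈ range m, (1 - q ^ (i + 1)) := by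
          rw [Finset.prod_const, Finset.card_range]
  rw [pa, pb]
  ring

theorem eval_deriv_sum (M : ℕ) :
    Polynomial.eval (-1 : PowerSeries R) (Polynomial.derivative (jacF q M)) =
    ∑ j ∈ range (2 * M + 1),
      q ^ tOf M j * (gb q (2 * M) j * ((j : PowerSeries R) * (-1) ^ (j - 1))) := by
  rw [jacF_eq_sum, Polynomial.derivative_sum]
  simp only [Polynomial.derivative_C_mul, Polynomial.derivative_X_pow, Polynomial.eval_finset_sum,
    Polynomial.eval_mul, Polynomial.eval_C, Polynomial.eval_pow, Polynomial.eval_X]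
  exact Finset.sum_congr rfl fun j _ => by ring

theorem tOf_bound1 (N j : ℕ) : N - tOf (N + 2) j ≤ j := by
  unfold tOf
  rcases le_or_gt (N + 2) j with h | h
  · rw [if_pos h]; omega
  · rw [if_neg (by omega)]
    have := self_le_triangle (N + 2 - j - 1)
    omega

theorem tOf_bound2 (N j : ℕ) : N - tOf (N + 2) j ≤ 2 * (N + 2) - j := by
  unfold tOf
  rcases le_or_gt (N + 2) j with h | h
  · rw [if_pos h]
    have := self_le_triangle (j - (N + 2))
    omega
  · rw [if_neg (by omega)]; omega

/-- The paired summand. -/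
noncomputable def jf (q : PowerSeries R) (M j : ℕ) : PowerSeries R :=
  q ^ tOf M j * ((j : PowerSeries R) * (-1) ^ (j - 1))

theorem pair_eq (N t : ℕ) (ht : t < N + 2) :
    jf q (N + 2) ((N + 2) + t) + jf q (N + 2) ((N + 2) - 1 - t) =
    (-1 : PowerSeries R) ^ (N + 1) *
      ((-1) ^ t * (((2 * t + 1 : ℕ) : PowerSeries R) * q ^ triangle t)) := by
  have e1 : tOf (N + 2) ((N + 2) + t) = triangle t := by
    unfold tOf; rw [if_pos (by omega)]; congr 1; omega
  rcases le_or_gt t N with hle | hgt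
  · have e2 : tOf (N + 2) ((N + 2) - 1 - t) = triangle t := by
      unfold tOf; rw [if_neg (by omega)]; congr 1; omega
    have s1 : (-1 : PowerSeries R) ^ ((N + 2) + t - 1) = (-1) ^ (N + 1) * (-1) ^ t := by
      rw [← pow_add]; congr 1; omega
    have s2 : (-1 : PowerSeries R) ^ ((N + 2) - 1 - t - 1) = (-1) ^ (N + 1) * (-1) ^ (t + 1) := by
      rw [← pow_add, show (N + 1) + (t + 1) = ((N + 2) - 1 - t - 1) + 2 * (t + 1) from by omega,
        pow_add, pow_mul]
      norm_num
    have c1 : (((N + 2) + t : ℕ) : PowerSeries R) =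
        (((N + 2) - 1 - t : ℕ) : PowerSeries R) + ((2 * t + 1 : ℕ) : PowerSeries R) := by
      have hn : ((N + 2) - 1 - t) + (2 * t + 1) = (N + 2) + t := by omega
      rw [← hn]
      push_cast [Nat.cast_add]
      ring
    unfold jf
    rw [e1, e2, s1, s2, c1]
    push_cast
    ring
  · have hteq : t = N + 1 := by omega
    have hzero : (N + 2) - 1 - t = 0 := by omega
    have f0 : jf q (N + 2) 0 = 0 := by unfold jf; simp
    rw [hzero, f0, add_zero]
    unfold jf
    rw [e1]
    have s1 : (-1 : PowerSeries R) ^ ((N + 2) + t - 1) = 1 := by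
      rw [show (N + 2) + t - 1 = 2 * (N + 1) from by omega, pow_mul]; norm_num
    have s2 : (-1 : PowerSeries R) ^ (N + 1) * (-1) ^ t = 1 := by
      rw [← pow_add, show (N + 1) + t = 2 * (N + 1) from by omega, pow_mul]; norm_num
    have c1 : (((N + 2) + t : ℕ) : PowerSeries R) = ((2 * t + 1 : ℕ) : PowerSeries R) := by
      congr 1; omega
    rw [s1, c1]
    linear_combination (-(((2 * t + 1 : ℕ) : PowerSeries R) * q ^ triangle t)) * s2

theorem sum_jf_split (N : ℕ) :
    ∑ j ∈ range (2 * (N + 2) + 1), jf q (N + 2) j =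
    (∑ t ∈ range (N + 2), (jf q (N + 2) ((N + 2) + t) + jf q (N + 2) ((N + 2) - 1 - t)))
      + jf q (N + 2) (2 * (N + 2)) := by
  rw [Finset.sum_range_succ]
  congr 1
  rw [Finset.sum_add_distrib]
  have h1 : ∑ j ∈ range (N + 2), jf q (N + 2) j =
      ∑ t ∈ range (N + 2), jf q (N + 2) ((N + 2) - 1 - t) :=
    (Finset.sum_range_reflect (fun j => jf q (N + 2) j) (N + 2)).symm
  have h2 : ∑ j ∈ Finset.Ico (N + 2) (2 * (N + 2)), jf q (N + 2) j =
      ∑ t ∈ range (N + 2), jf q (N + 2) ((N + 2) + t) := by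
    rw [Finset.sum_Ico_eq_sum_range]
    rw [show 2 * (N + 2) - (N + 2) = N + 2 from by omega]
  rw [← h1, ← h2, Finset.range_eq_Ico, Finset.range_eq_Ico,
    add_comm (∑ j ∈ Finset.Ico (N + 2) (2 * (N + 2)), jf q (N + 2) j)
      (∑ j ∈ Finset.Ico 0 (N + 2), jf q (N + 2) j),
    Finset.sum_Ico_consecutive _ (Nat.zero_le _) (by omega : N + 2 ≤ 2 * (N + 2))]

theorem jacobi_cube {q : PowerSeries R} (hq : X ∣ q) (N : ℕ) :
    EqUpTo N ((∏ i ∈ range N, (1 - q ^ (i + 1))) ^ 3)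
      (∑ t ∈ range (N + 2), (-1 : PowerSeries R) ^ t *
        (((2 * t + 1 : ℕ) : PowerSeries R) * q ^ triangle t)) := by
  have hEk : ∀ K, N ≤ K → EqUpTo N (∏ i ∈ range K, (1 - q ^ (i + 1)))
      (∏ i ∈ range N, (1 - q ^ (i + 1))) := by
    intro K hK
    rw [← Finset.prod_range_mul_prod_Ico _ hK]
    have h1 := eqUpTo_one_prod (Finset.Ico N K) (fun i => i + 1)
      (fun i hi => by rw [Finset.mem_Ico] at hi; exact (show N < i + 1 by omega)) hq
    have h2 := (EqUpTo.refl N (∏ i ∈ range N, (1 - q ^ (i + 1)))).mul h1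
    simpa using h2
  -- exact identity from the triple product
  have hexact : (-1 : PowerSeries R) ^ (N + 1) *
      ((∏ i ∈ range (N + 2), (1 - q ^ (i + 1))) * ∏ i ∈ range (N + 1), (1 - q ^ (i + 1))) =
      ∑ j ∈ range (2 * (N + 2) + 1), q ^ tOf (N + 2) j *
        (gb q (2 * (N + 2)) j * ((j : PowerSeries R) * (-1) ^ (j - 1))) := by
    rw [← eval_deriv_sum q (N + 2), show N + 2 = (N + 1) + 1 from rfl, eval_deriv_jacF q (N + 1)]
  -- replace gb by the middle column U
  have happrox : EqUpTo N
      (∑ j ∈ range (2 * (N + 2) + 1), q ^ tOf (N + 2) j *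
        (gb q (2 * (N + 2)) j * ((j : PowerSeries R) * (-1) ^ (j - 1))))
      (∑ j ∈ range (2 * (N + 2) + 1), q ^ tOf (N + 2) j *
        (gb q (2 * (N + 2)) (N + 2) * ((j : PowerSeries R) * (-1) ^ (j - 1)))) := by
    apply EqUpTo.sum
    intro j hj
    rw [Finset.mem_range] at hj
    exact EqUpTo.qpow_mul hq
      ((gb_mid hq (by omega) (tOf_bound1 N j) (tOf_bound2 N j)).mul (EqUpTo.refl _ _))
  -- factor U out
  have hfac : (∑ j ∈ range (2 * (N + 2) + 1), q ^ tOf (N + 2) j *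
        (gb q (2 * (N + 2)) (N + 2) * ((j : PowerSeries R) * (-1) ^ (j - 1)))) =
      gb q (2 * (N + 2)) (N + 2) * ∑ j ∈ range (2 * (N + 2) + 1), jf q (N + 2) j := by
    rw [Finset.mul_sum]
    exact Finset.sum_congr rfl fun j _ => by unfold jf; ring
  -- pairing
  have hpair : EqUpTo N (∑ j ∈ range (2 * (N + 2) + 1), jf q (N + 2) j)
      ((-1 : PowerSeries R) ^ (N + 1) * ∑ t ∈ range (N + 2), (-1 : PowerSeries R) ^ t *
        (((2 * t + 1 : ℕ) : PowerSeries R) * q ^ triangle t)) := by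
    rw [sum_jf_split, Finset.sum_congr rfl (fun t ht => pair_eq q N t (Finset.mem_range.mp ht)),
      ← Finset.mul_sum]
    have hlast : EqUpTo N (jf q (N + 2) (2 * (N + 2))) 0 := by
      unfold jf
      have e1 : tOf (N + 2) (2 * (N + 2)) = triangle (N + 2) := by
        unfold tOf; rw [if_pos (by omega)]; congr 1; omega
      rw [e1]
      refine eqUpTo_zero_of_X_pow_dvd (lt_of_lt_of_le (by omega : N < N + 2)
        (self_le_triangle (N + 2))) ?_
      exact (pow_dvd_pow_of_dvd hq _).trans (dvd_mul_right _ _)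
    have := (EqUpTo.refl N ((-1 : PowerSeries R) ^ (N + 1) *
      ∑ t ∈ range (N + 2), (-1 : PowerSeries R) ^ t *
        (((2 * t + 1 : ℕ) : PowerSeries R) * q ^ triangle t))).add hlast
    simpa using this
  -- U is inverse of E (N+2) up to degree N
  have hEU : EqUpTo N ((∏ i ∈ range (N + 2), (1 - q ^ (i + 1))) * gb q (2 * (N + 2)) (N + 2)) 1 := by
    rw [gb_mul_prod q (2 * (N + 2)) (N + 2)]
    exact eqUpTo_one_prod _ (fun i => 2 * (N + 2) + i + 1 - (N + 2))
      (fun i hi => show N < 2 * (N + 2) + i + 1 - (N + 2) by omega) hq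
  -- put everything together
  have step1 : EqUpTo N
      ((∏ i ∈ range (N + 2), (1 - q ^ (i + 1))) * ∏ i ∈ range (N + 1), (1 - q ^ (i + 1)))
      (gb q (2 * (N + 2)) (N + 2) * ∑ t ∈ range (N + 2), (-1 : PowerSeries R) ^ t *
        (((2 * t + 1 : ℕ) : PowerSeries R) * q ^ triangle t)) := by
    have h1 : EqUpTo N
        ((-1 : PowerSeries R) ^ (N + 1) * ((-1 : PowerSeries R) ^ (N + 1) *
          ((∏ i ∈ range (N + 2), (1 - q ^ (i + 1))) * ∏ i ∈ range (N + 1), (1 - q ^ (i + 1)))))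
        ((-1 : PowerSeries R) ^ (N + 1) * (gb q (2 * (N + 2)) (N + 2) *
          ((-1 : PowerSeries R) ^ (N + 1) * ∑ t ∈ range (N + 2), (-1 : PowerSeries R) ^ t *
            (((2 * t + 1 : ℕ) : PowerSeries R) * q ^ triangle t)))) := by
      apply (EqUpTo.refl N _).mul
      rw [hexact]
      exact (happrox.trans (hfac ▸ EqUpTo.refl N _)).trans
        ((EqUpTo.refl N (gb q (2 * (N + 2)) (N + 2))).mul hpair)
    have hsq : ((-1 : PowerSeries R) ^ (N + 1)) * ((-1 : PowerSeries R) ^ (N + 1)) = 1 := by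
      rw [← pow_add, show (N + 1) + (N + 1) = 2 * (N + 1) from by omega, pow_mul]; norm_num
    intro n hn
    have := h1 n hn
    rw [show ((-1 : PowerSeries R) ^ (N + 1) * ((-1 : PowerSeries R) ^ (N + 1) *
          ((∏ i ∈ range (N + 2), (1 - q ^ (i + 1))) * ∏ i ∈ range (N + 1), (1 - q ^ (i + 1))))) =
        ((∏ i ∈ range (N + 2), (1 - q ^ (i + 1))) * ∏ i ∈ range (N + 1), (1 - q ^ (i + 1)))
        from by rw [← mul_assoc, hsq, one_mul],
      show ((-1 : PowerSeries R) ^ (N + 1) * (gb q (2 * (N + 2)) (N + 2) *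
          ((-1 : PowerSeries R) ^ (N + 1) * ∑ t ∈ range (N + 2), (-1 : PowerSeries R) ^ t *
            (((2 * t + 1 : ℕ) : PowerSeries R) * q ^ triangle t)))) =
        (gb q (2 * (N + 2)) (N + 2) * ∑ t ∈ range (N + 2), (-1 : PowerSeries R) ^ t *
            (((2 * t + 1 : ℕ) : PowerSeries R) * q ^ triangle t))
        from by rw [show ∀ a b c : PowerSeries R, a * (b * (a * c)) = (a * a) * (b * c) from
          fun a b c => by ring, hsq, one_mul]] at this
    exact this
  -- multiply by E (N+2) once more
  have step2 : EqUpTo N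
      ((∏ i ∈ range (N + 2), (1 - q ^ (i + 1))) *
        ((∏ i ∈ range (N + 2), (1 - q ^ (i + 1))) * ∏ i ∈ range (N + 1), (1 - q ^ (i + 1))))
      (∑ t ∈ range (N + 2), (-1 : PowerSeries R) ^ t *
        (((2 * t + 1 : ℕ) : PowerSeries R) * q ^ triangle t)) := by
    have h2 := (EqUpTo.refl N (∏ i ∈ range (N + 2), (1 - q ^ (i + 1)))).mul step1
    have h3 : EqUpTo N
        ((∏ i ∈ range (N + 2), (1 - q ^ (i + 1))) * (gb q (2 * (N + 2)) (N + 2) *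
          ∑ t ∈ range (N + 2), (-1 : PowerSeries R) ^ t *
            (((2 * t + 1 : ℕ) : PowerSeries R) * q ^ triangle t)))
        (∑ t ∈ range (N + 2), (-1 : PowerSeries R) ^ t *
            (((2 * t + 1 : ℕ) : PowerSeries R) * q ^ triangle t)) := by
      rw [← mul_assoc]
      have := hEU.mul (EqUpTo.refl N (∑ t ∈ range (N + 2), (-1 : PowerSeries R) ^ t *
            (((2 * t + 1 : ℕ) : PowerSeries R) * q ^ triangle t)))
      simpa using this
    exact h2.trans h3
  -- replace truncation levels
  have hfinal : EqUpTo N ((∏ i ∈ range N, (1 - q ^ (i + 1))) ^ 3)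
      ((∏ i ∈ range (N + 2), (1 - q ^ (i + 1))) *
        ((∏ i ∈ range (N + 2), (1 - q ^ (i + 1))) * ∏ i ∈ range (N + 1), (1 - q ^ (i + 1)))) := by
    have hA := hEk (N + 2) (by omega)
    have hB := hEk (N + 1) (by omega)
    intro n hn
    rw [show (∏ i ∈ range N, (1 - q ^ (i + 1))) ^ 3 =
      (∏ i ∈ range N, (1 - q ^ (i + 1))) * ((∏ i ∈ range N, (1 - q ^ (i + 1))) *
        ∏ i ∈ range N, (1 - q ^ (i + 1))) from by ring]
    exact (hA.mul (hA.mul hB)).symm n hn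
  exact hfinal.trans step2

theorem two_triangle (t : ℕ) : 2 * triangle t = t * (t + 1) := by
  induction t with
  | zero => rfl
  | succ t ih => rw [triangle_succ, Nat.mul_add, Nat.mul_add, ih]; ring

theorem key_arith (t s n : ℕ) (h : triangle t + 2 * triangle s = 7 * n + 4) :
    ((2 * t + 1 : ℕ) : ZMod 7) * ((2 * s + 1 : ℕ) : ZMod 7) = 0 := by
  have h2 : t * (t + 1) + 2 * (s * (s + 1)) = 14 * n + 8 := by
    have := two_triangle t
    have := two_triangle s
    omega
  have hz : ∀ x y : ZMod 7, x * (x + 1) + 2 * (y * (y + 1)) = 1 → (2 * x + 1) * (2 * y + 1) = 0 := by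
    decide
  have hcast := congrArg (Nat.cast : ℕ → ZMod 7) h2
  push_cast at hcast
  have h14 : (14 : ZMod 7) = 0 := by decide
  have h8 : (8 : ZMod 7) = 1 := by decide
  rw [h14, h8, zero_mul, zero_add] at hcast
  have := hz (t : ZMod 7) (s : ZMod 7) hcast
  push_cast
  linear_combination this

/-- The truncated `(q^7;q^7)` product over `ZMod 7`. -/
noncomputable def eta7 (M : ℕ) : PowerSeries (ZMod 7) :=
  ∏ i ∈ Finset.range M, (1 - X ^ (7 * (i + 1)))

theorem eta7_coeff_eq_zero (M : ℕ) : ∀ i, ¬ (7 ∣ i) → PowerSeries.coeff i (eta7 M) = 0 := by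
  induction M with
  | zero =>
    intro i hi
    rw [eta7, Finset.range_zero, Finset.prod_empty, PowerSeries.coeff_one, if_neg (by omega)]
  | succ M ih =>
    intro i hi
    rw [eta7, Finset.prod_range_succ, ← eta7, mul_sub, mul_one, map_sub, ih i hi,
      PowerSeries.coeff_mul_X_pow']
    rcases le_or_gt (7 * (M + 1)) i with h | h
    · rw [if_pos h, ih (i - 7 * (M + 1)) (by omega)]; ring
    · rw [if_neg (by omega)]; ring

theorem eta7_constantCoeff (M : ℕ) : PowerSeries.coeff 0 (eta7 M) = 1 := by
  rw [PowerSeries.coeff_zero_eq_constantCoeff, eta7, map_prod]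
  apply Finset.prod_eq_one
  intro i _
  rw [map_sub, map_one, map_pow, PowerSeries.constantCoeff_X, zero_pow (by omega), sub_zero]

theorem sum_to_C (q : PowerSeries (ZMod 7)) (M : ℕ) :
    (∑ t ∈ Finset.range M, (-1 : PowerSeries (ZMod 7)) ^ t *
      (((2 * t + 1 : ℕ) : PowerSeries (ZMod 7)) * q ^ triangle t)) =
    ∑ t ∈ Finset.range M, PowerSeries.C ((-1) ^ t * ((2 * t + 1 : ℕ) : ZMod 7)) *
      q ^ triangle t := by
  apply Finset.sum_congr rfl
  intro t _
  rw [map_mul, map_pow, map_neg, map_one, map_natCast]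
  ring

theorem coeff_S1S2 (N n : ℕ) :
    PowerSeries.coeff (7 * n + 4)
      ((∑ t ∈ Finset.range (N + 2), (-1 : PowerSeries (ZMod 7)) ^ t *
          (((2 * t + 1 : ℕ) : PowerSeries (ZMod 7)) * X ^ triangle t)) *
       (∑ s ∈ Finset.range (N + 2), (-1 : PowerSeries (ZMod 7)) ^ s *
          (((2 * s + 1 : ℕ) : PowerSeries (ZMod 7)) * (X ^ 2) ^ triangle s))) = 0 := by
  rw [sum_to_C, sum_to_C, Finset.sum_mul_sum, map_sum]
  apply Finset.sum_eq_zero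
  intro t _
  rw [map_sum]
  apply Finset.sum_eq_zero
  intro s _
  have hform : PowerSeries.C ((-1) ^ t * ((2 * t + 1 : ℕ) : ZMod 7)) * X ^ triangle t *
      (PowerSeries.C ((-1) ^ s * ((2 * s + 1 : ℕ) : ZMod 7)) * (X ^ 2) ^ triangle s) =
      PowerSeries.C (((-1) ^ t * ((2 * t + 1 : ℕ) : ZMod 7)) *
        ((-1) ^ s * ((2 * s + 1 : ℕ) : ZMod 7))) * X ^ (triangle t + 2 * triangle s) := by
    simp only [map_mul]
    rw [pow_add, ← pow_mul]
    ring
  rw [hform, PowerSeries.coeff_C_mul, PowerSeries.coeff_X_pow]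
  rcases eq_or_ne (7 * n + 4) (triangle t + 2 * triangle s) with he | hne
  · have hk := key_arith t s n he.symm
    rw [if_pos he, mul_one]
    linear_combination ((-1 : ZMod 7) ^ t * (-1 : ZMod 7) ^ s) * hk
  · rw [if_neg hne, mul_zero]

/-- Truncated product `∏_{j=1}^{N} (1 - q^{k j})`, approximating `(q^k;q^k)_∞`. -/
noncomputable def etaTrunc (k N : ℕ) : PowerSeries ℤ :=
  ∏ j ∈ Finset.range N, (1 - (PowerSeries.X : PowerSeries ℤ) ^ (k * (j + 1)))

/-- `a` has generating function `(q^2;q^2)_∞^{r-1}/(q;q)_∞^r`, expressed via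
coefficientwise agreement with truncated products. -/
def IsGF (r : ℕ) (a : ℕ → ℤ) : Prop :=
  ∀ N n : ℕ, n ≤ N →
    PowerSeries.coeff n (etaTrunc 1 N ^ r * PowerSeries.mk a) =
    PowerSeries.coeff n (etaTrunc 2 N ^ (r - 1))

theorem stmt_3 (a : ℕ → ℤ) (ha : IsGF 4 a) :
    ∀ n : ℕ, (7 : ℤ) ∣ a (7 * n + 4) := by
  intro n
  induction n using Nat.strong_induction_on with
  | _ n IH =>
  set φ : ℤ →+* ZMod 7 := Int.castRingHom (ZMod 7) with hφ
  set N : ℕ := 7 * n + 4 with hN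
  set P : PowerSeries (ZMod 7) := ∏ i ∈ Finset.range N, (1 - X ^ (i + 1)) with hPdef
  set Q : PowerSeries (ZMod 7) := ∏ i ∈ Finset.range N, (1 - (X ^ 2) ^ (i + 1)) with hQdef
  set A : PowerSeries (ZMod 7) := PowerSeries.map φ (PowerSeries.mk a) with hAdef
  have hP : PowerSeries.map φ (etaTrunc 1 N) = P := by
    rw [etaTrunc, map_prod, hPdef]
    apply Finset.prod_congr rfl
    intro i _
    rw [map_sub, map_one, map_pow, PowerSeries.map_X, one_mul]
  have hQ : PowerSeries.map φ (etaTrunc 2 N) = Q := by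
    rw [etaTrunc, map_prod, hQdef]
    apply Finset.prod_congr rfl
    intro i _
    rw [map_sub, map_one, map_pow, PowerSeries.map_X, ← pow_mul]
  have h0 : EqUpTo N (P ^ 4 * A) (Q ^ 3) := by
    intro m hm
    have h := congrArg φ (ha N m hm)
    rwa [← PowerSeries.coeff_map, ← PowerSeries.coeff_map, map_mul, map_pow, map_pow, hP, hQ]
      at h
  have hfrob : P ^ 7 = eta7 N := by
    haveI : Fact (Nat.Prime 7) := ⟨by norm_num⟩
    haveI : CharP (PowerSeries (ZMod 7)) 7 :=
      charP_of_injective_ringHom (PowerSeries.C_injective (R := ZMod 7)) 7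
    rw [eta7, hPdef, ← Finset.prod_pow]
    apply Finset.prod_congr rfl
    intro i _
    rw [sub_pow_char, one_pow, ← pow_mul, mul_comm (i + 1) 7]
  have h3 : EqUpTo N (eta7 N * A) (P ^ 3 * Q ^ 3) := by
    have h1 := (EqUpTo.refl N (P ^ 3)).mul h0
    intro m hm
    have h2 := h1 m hm
    rwa [show P ^ 3 * (P ^ 4 * A) = P ^ 7 * A from by ring, hfrob] at h2
  have hS : PowerSeries.coeff N (P ^ 3 * Q ^ 3) = 0 := by
    have j1 := jacobi_cube (dvd_refl (X : PowerSeries (ZMod 7))) N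
    have j2 := jacobi_cube (show (X : PowerSeries (ZMod 7)) ∣ X ^ 2 from ⟨X, sq X⟩) N
    have hc := (j1.mul j2) N le_rfl
    rw [hPdef, hQdef]
    rw [hc, hN]
    exact coeff_S1S2 N n
  have h5 : PowerSeries.coeff N (eta7 N * A) = 0 := (h3 N le_rfl).trans hS
  rw [PowerSeries.coeff_mul] at h5
  have hA : ∀ m, PowerSeries.coeff m A = ((a m : ZMod 7)) := by
    intro m
    rw [hAdef, PowerSeries.coeff_map, PowerSeries.coeff_mk]
    rfl
  rw [Finset.sum_eq_single (0, N)] at h5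
  · rw [eta7_constantCoeff, one_mul, hA] at h5
    have := (ZMod.intCast_zmod_eq_zero_iff_dvd (a N) 7).mp h5
    exact_mod_cast this
  · rintro ⟨b1, b2⟩ hb hne
    rw [Finset.HasAntidiagonal.mem_antidiagonal] at hb
    by_cases h7 : 7 ∣ b1
    · obtain ⟨u, hu⟩ := h7
      have hu1 : 1 ≤ u := by
        rcases Nat.eq_zero_or_pos u with h | h
        · exfalso; apply hne; subst h; simp at hu; subst hu; simp at hb ⊢; omega
        · exact h
      have hb2 : b2 = 7 * (n - u) + 4 := by omega
      have hzero : PowerSeries.coeff b2 A = 0 := by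
        rw [hA, hb2]
        have hdvd := IH (n - u) (by omega)
        exact (ZMod.intCast_zmod_eq_zero_iff_dvd _ 7).mpr (by exact_mod_cast hdvd)
      rw [hzero, mul_zero]
    · rw [eta7_coeff_eq_zero N b1 h7, zero_mul]
  · intro hmem
    exfalso
    exact hmem (by rw [Finset.HasAntidiagonal.mem_antidiagonal]; simp)
end

section
/- For all n ≥ 0, a_7(7n+3) ≡ 0 (mod 7), where a_7(n) is defined by ∑_{n≥0} a_7(n) q^n = (q^2;q^2)_∞^6/(q;q)_∞^7. -/
open Polynomial Finset

open Polynomial Finset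

/-- Gaussian binomial coefficient as a polynomial in `q = X`. -/
noncomputable def Bq : ℕ → ℕ → Polynomial ℤ
  | _, 0 => 1
  | 0, _+1 => 0
  | a+1, b+1 => Bq a b + X ^ (b+1) * Bq a (b+1)

@[simp] lemma Bq_zero_right (a : ℕ) : Bq a 0 = 1 := by cases a <;> rfl

lemma Bq_pascal1 (a b : ℕ) : Bq (a+1) (b+1) = Bq a b + X ^ (b+1) * Bq a (b+1) := rfl

lemma Bq_zero_of_gt : ∀ {a b : ℕ}, a < b → Bq a b = 0 := by
  intro a
  induction a with
  | zero => intro b hb; match b, hb with | b+1, _ => rfl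
  | succ a ih =>
    intro b hb
    match b, hb with
    | b+1, hb =>
      rw [Bq_pascal1, ih (by omega), ih (by omega)]
      ring

@[simp] lemma Bq_self (a : ℕ) : Bq a a = 1 := by
  induction a with
  | zero => rfl
  | succ a ih => rw [Bq_pascal1, ih, Bq_zero_of_gt (by omega)]; ring

/-- `(q;q)_n` truncated product. -/
noncomputable def qfac (n : ℕ) : Polynomial ℤ :=
  ∏ j ∈ range n, (1 - X ^ (j+1))

@[simp] lemma qfac_zero : qfac 0 = 1 := by simp [qfac]

lemma qfac_succ (n : ℕ) : qfac (n+1) = qfac n * (1 - X ^ (n+1)) := by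
  rw [qfac, Finset.prod_range_succ]; rfl

lemma qfac_ne_zero (n : ℕ) : qfac n ≠ 0 := by
  intro h
  have := congrArg (fun p => Polynomial.eval 0 p) h
  simp [qfac, Polynomial.eval_prod] at this

lemma qfac_prod_Bq : ∀ a b : ℕ, b ≤ a → qfac b * qfac (a - b) * Bq a b = qfac a := by
  intro a
  induction a with
  | zero => intro b hb; interval_cases b; simp
  | succ a ih =>
    intro b hb
    cases b with
    | zero => simp
    | succ b =>
      rcases Nat.lt_or_ge b a with h' | h'
      · -- b < a
        have e : a + 1 - (b+1) = (a - (b+1)) + 1 := by omega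
        have e2 : a - (b+1) + 1 = a - b := by omega
        have ih1 := ih b (by omega)
        have ih2 := ih (b+1) (by omega)
        have e3 : b + 1 + (a - b) = a + 1 := by omega
        have hx : (X:ℤ[X]) ^ (b+1) * X ^ (a-b) = X ^ (a+1) := by rw [← pow_add, e3]
        have ih1' : qfac b * (qfac (a-(b+1)) * (1 - X^(a-b))) * Bq a b = qfac a := by
          rw [show qfac (a-(b+1)) * (1 - X^(a-b)) = qfac (a-b) by
            rw [← e2, ← qfac_succ, e2]]
          exact ih1
        rw [qfac_succ b] at ih2
        rw [Bq_pascal1, e, qfac_succ (a-(b+1)), e2, qfac_succ b, qfac_succ a]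
        linear_combination ((1:ℤ[X]) - X^(b+1)) * ih1' + X^(b+1)*(1-X^(a-b)) * ih2
          - qfac a * hx
      · -- b ≥ a, so b = a
        have hba : b = a := by omega
        subst hba
        rw [Bq_self, Nat.sub_self, qfac_zero, mul_one, mul_one]

lemma Bq_samerow {a b : ℕ} (hb : b < a) :
    (1 - X ^ (a - b)) * Bq a b = (1 - X ^ (b+1)) * Bq a (b+1) := by
  have h1 := qfac_prod_Bq a b (by omega)
  have h2 := qfac_prod_Bq a (b+1) (by omega)
  have key : qfac b * qfac (a - (b+1)) *
      ((1 - X ^ (a - b)) * Bq a b - (1 - X ^ (b+1)) * Bq a (b+1)) = 0 := by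
    have e2 : a - (b+1) + 1 = a - b := by omega
    have l1 : qfac (a - (b+1)) * (1 - X ^ (a-b)) = qfac (a - b) := by
      rw [← e2, ← qfac_succ, e2]
    have l2 : qfac b * (1 - X ^ (b+1)) = qfac (b+1) := (qfac_succ b).symm
    calc qfac b * qfac (a - (b+1)) *
        ((1 - X ^ (a - b)) * Bq a b - (1 - X ^ (b+1)) * Bq a (b+1))
        = qfac b * (qfac (a - (b+1)) * (1 - X ^ (a-b))) * Bq a b
          - (qfac b * (1 - X ^ (b+1))) * qfac (a - (b+1)) * Bq a (b+1) := by ring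
      _ = 0 := by rw [l1, l2, h1, h2, sub_self]
  rcases mul_eq_zero.mp key with h | h
  · exact absurd h (mul_ne_zero (qfac_ne_zero _) (qfac_ne_zero _))
  · linear_combination h

lemma Bq_pascal2 {a b : ℕ} (hb : b ≤ a) :
    Bq (a+1) (b+1) = X ^ (a - b) * Bq a b + Bq a (b+1) := by
  rcases Nat.eq_or_lt_of_le hb with h | h
  · subst h
    simp [Bq_pascal1, Bq_zero_of_gt (Nat.lt_succ_self b)]
  · rw [Bq_pascal1]
    linear_combination Bq_samerow h

/-- Consecutive Gaussian binomials agree to high order. -/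
lemma Bq_diff_dvd {a b : ℕ} (hb : b < a) :
    (X:ℤ[X]) ^ (min (b+1) (a-b)) ∣ Bq a (b+1) - Bq a b := by
  have h := Bq_samerow hb
  have : Bq a (b+1) - Bq a b = X^(b+1) * Bq a (b+1) - X^(a-b) * Bq a b := by
    linear_combination -h
  rw [this]
  exact dvd_sub (Dvd.dvd.mul_right (pow_dvd_pow _ (min_le_left _ _)) _)
    (Dvd.dvd.mul_right (pow_dvd_pow _ (min_le_right _ _)) _)

/-- Stabilization: any `Bq (2n) j` agrees with the central one to high order. -/
lemma Bq_central_dvd (n j L : ℕ) (hj : j ≤ 2*n) (h1 : L ≤ j + 1) (h2 : L ≤ 2*n - j + 1)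
    (h3 : L ≤ n + 1) :
    (X:ℤ[X]) ^ L ∣ Bq (2*n) j - Bq (2*n) n := by
  rcases le_or_gt n j with h | h
  · -- telescope from n up to j
    clear h1
    induction j with
    | zero =>
      have : n = 0 := by omega
      simp [this]
    | succ j ih =>
      rcases Nat.eq_or_lt_of_le h with h' | h'
      · rw [← h']; simp
      · have hj' : j ≤ 2*n := by omega
        have hnj : n ≤ j := by omega
        have step : (X:ℤ[X]) ^ L ∣ Bq (2*n) (j+1) - Bq (2*n) j := by
          apply dvd_trans (pow_dvd_pow _ _) (Bq_diff_dvd (show j < 2*n by omega))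
          have : 2*n - j = 2*n - (j+1) + 1 := by omega
          omega
        have rec' := ih hj' (by omega) hnj
        have : Bq (2*n) (j+1) - Bq (2*n) n
            = (Bq (2*n) (j+1) - Bq (2*n) j) + (Bq (2*n) j - Bq (2*n) n) := by ring
        rw [this]
        exact dvd_add step rec'
  · -- j < n : telescope downwards; induct on n - j
    clear h2
    have key : ∀ d j, j + d ≤ n → L ≤ j + 1 → (X:ℤ[X]) ^ L ∣ Bq (2*n) (j+d) - Bq (2*n) j := by
      intro d
      induction d with
      | zero => intro j _ _; simp
      | succ d ih =>
        intro j hjd hL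
        have step : (X:ℤ[X]) ^ L ∣ Bq (2*n) (j+1) - Bq (2*n) j := by
          apply dvd_trans (pow_dvd_pow _ _) (Bq_diff_dvd (show j < 2*n by omega))
          omega
        have rec' := ih (j+1) (by omega) (by omega)
        have e : Bq (2*n) (j+(d+1)) - Bq (2*n) j
            = (Bq (2*n) (j+1+d) - Bq (2*n) (j+1)) + (Bq (2*n) (j+1) - Bq (2*n) j) := by
          rw [show j+(d+1) = j+1+d by omega]; ring
        rw [e]
        exact dvd_add rec' step
    have := key (n - j) j (by omega) h1
    rw [show j + (n-j) = n by omega] at this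
    rw [← neg_sub]
    exact dvd_neg.mpr this

/-! ### ℤ-indexed Gaussian binomials and triangular numbers -/

noncomputable def BZ (a : ℕ) (m : ℤ) : Polynomial ℤ :=
  if 0 ≤ m then Bq a m.toNat else 0

lemma BZ_of_nonneg {m : ℤ} (h : 0 ≤ m) (a : ℕ) : BZ a m = Bq a m.toNat := if_pos h

lemma BZ_of_neg {m : ℤ} (h : m < 0) (a : ℕ) : BZ a m = 0 := if_neg (by omega)

lemma BZ_of_gt {a : ℕ} {m : ℤ} (h : (a:ℤ) < m) : BZ a m = 0 := by
  rw [BZ_of_nonneg (by omega), Bq_zero_of_gt (by omega)]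

lemma BZ_ne_zero_range {a : ℕ} {m : ℤ} (h : BZ a m ≠ 0) : 0 ≤ m ∧ m ≤ a := by
  constructor
  · by_contra hc; exact h (BZ_of_neg (by omega) a)
  · by_contra hc; exact h (BZ_of_gt (by omega))

lemma BZ_pascal1 (a : ℕ) (m : ℤ) :
    BZ (a+1) m = BZ a (m-1) + X ^ m.toNat * BZ a m := by
  rcases lt_or_ge m 0 with h | h
  · rw [BZ_of_neg h, BZ_of_neg (by omega), BZ_of_neg h, mul_zero, add_zero]
  rcases eq_or_lt_of_le h with h0 | h0
  · rw [← h0]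
    rw [BZ_of_nonneg le_rfl, BZ_of_nonneg le_rfl, BZ_of_neg (by omega)]
    simp
  · have hm : m = ((m.toNat - 1 : ℕ) : ℤ) + 1 := by omega
    rw [BZ_of_nonneg h, BZ_of_nonneg (by omega), BZ_of_nonneg h]
    have e1 : m.toNat = (m.toNat - 1) + 1 := by omega
    have e2 : (m-1).toNat = m.toNat - 1 := by omega
    rw [e2, e1, Bq_pascal1, Nat.add_sub_cancel]

lemma BZ_pascal2 (a : ℕ) (m : ℤ) :
    BZ (a+1) m = X ^ ((a+1:ℤ) - m).toNat * BZ a (m-1) + BZ a m := by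
  rcases lt_or_ge m 0 with h | h
  · rw [BZ_of_neg h, BZ_of_neg (show m - 1 < 0 by omega), BZ_of_neg h]
    simp
  rcases eq_or_lt_of_le h with h0 | h0
  · rw [← h0]
    rw [BZ_of_nonneg le_rfl, BZ_of_nonneg le_rfl, BZ_of_neg (by omega)]
    simp
  rcases lt_or_ge (a:ℤ) (m-1) with h1 | h1
  · rw [BZ_of_gt (show ((a:ℤ)+1) < m by omega), BZ_of_gt h1, BZ_of_gt (by omega)]
    simp
  · rw [BZ_of_nonneg h, BZ_of_nonneg (by omega), BZ_of_nonneg h]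
    have e1 : m.toNat = ((m-1).toNat) + 1 := by omega
    have hb : (m-1).toNat ≤ a := by omega
    rw [e1, Bq_pascal2 hb]
    have e3 : ((a:ℤ)+1 - m).toNat = a - (m-1).toNat := by omega
    rw [e3]

/-- Triangular number of an integer, `k(k+1)/2`, as a natural number. -/
def Tz (k : ℤ) : ℕ := (k * (k+1) / 2).toNat

lemma Tz_cast (k : ℤ) : 2 * (Tz k : ℤ) = k * (k+1) := by
  have he : (2:ℤ) ∣ k * (k+1) := (Int.even_mul_succ_self k).two_dvd
  have hnn : 0 ≤ k * (k+1) := by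
    rcases le_or_gt 0 k with h | h
    · positivity
    · have := mul_nonneg (show (0:ℤ) ≤ -k by omega) (show (0:ℤ) ≤ -(k+1) by omega)
      nlinarith [this]
  rw [Tz, Int.toNat_of_nonneg (Int.ediv_nonneg hnn (by norm_num)),
    Int.mul_ediv_cancel' he]

lemma Tz_succ (k : ℤ) : (Tz (k+1) : ℤ) = Tz k + (k+1) := by
  have h1 := Tz_cast (k+1)
  have h2 := Tz_cast k
  nlinarith [h1, h2]

lemma Tz_neg (k : ℤ) : Tz (-(k+1)) = Tz k := by
  unfold Tz
  congr 1
  ring_nf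

lemma Tz_ge (k : ℤ) : (k.natAbs : ℤ) ≤ (Tz k : ℤ) + 1 := by
  have h := Tz_cast k
  rcases le_or_gt 0 k with hk | hk
  · have : k.natAbs = k := Int.natAbs_of_nonneg hk
    nlinarith [this, h]
  · have : (k.natAbs : ℤ) = -k := Int.ofNat_natAbs_of_nonpos (by omega)
    nlinarith [this, h]

@[simp] lemma Tz_zero : Tz 0 = 0 := rfl

/-! ### The three-term relation -/

lemma X_pow_congr {a : ℕ} {m : ℤ} {e1 e2 : ℕ} (h : 0 ≤ m → m ≤ a → e1 = e2) :
    (X:ℤ[X]) ^ e1 * BZ a m = X ^ e2 * BZ a m := by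
  by_cases hz : BZ a m = 0
  · rw [hz, mul_zero, mul_zero]
  · obtain ⟨h1, h2⟩ := BZ_ne_zero_range hz
    rw [h h1 h2]

lemma three_term (n : ℕ) (k : ℤ) :
    BZ (2*n+2) ((n:ℤ)+1+k) * X ^ Tz k
    = X^n * (BZ (2*n) ((n:ℤ)+(k+1)) * X ^ Tz (k+1))
      + (1 + X^(2*n+1)) * (BZ (2*n) ((n:ℤ)+k) * X ^ Tz k)
      + X^(n+1) * (BZ (2*n) ((n:ℤ)+(k-1)) * X ^ Tz (k-1)) := by
  have t1 : (Tz (k+1) : ℤ) = Tz k + (k+1) := Tz_succ k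
  have t2 : (Tz k : ℤ) = Tz (k-1) + k := by
    have h := Tz_succ (k-1)
    rw [show k-1+1 = k by ring] at h
    linarith
  have p2 : BZ (2*n+2) ((n:ℤ)+1+k)
      = X ^ ((2*(n:ℤ)+1+1) - ((n:ℤ)+1+k)).toNat * BZ (2*n+1) ((n:ℤ)+1+k-1)
        + BZ (2*n+1) ((n:ℤ)+1+k) := by
    have h := BZ_pascal2 (2*n+1) ((n:ℤ)+1+k)
    rw [show (2*n+1+1) = 2*n+2 by ring] at h
    rw [h]
    norm_num
  rw [p2]
  rw [BZ_pascal1 (2*n) ((n:ℤ)+1+k-1), BZ_pascal1 (2*n) ((n:ℤ)+1+k)]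
  rw [show (n:ℤ)+1+k-1 = (n:ℤ)+k by ring]
  rw [show (n:ℤ)+k-1 = (n:ℤ)+(k-1) by ring]
  rw [show (n:ℤ)+1+k = (n:ℤ)+(k+1) by ring]
  have h1 : (X:ℤ[X]) ^ (((n:ℤ)+(k+1)).toNat + Tz k) * BZ (2*n) ((n:ℤ)+(k+1))
      = X ^ (n + Tz (k+1)) * BZ (2*n) ((n:ℤ)+(k+1)) := by
    apply X_pow_congr; intro hge hle; omega
  have h2 : (X:ℤ[X]) ^ (((2*(n:ℤ)+1+1) - ((n:ℤ)+k+1)).toNat + (((n:ℤ)+k).toNat + Tz k)) *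
      BZ (2*n) ((n:ℤ)+k)
      = X ^ (2*n+1 + Tz k) * BZ (2*n) ((n:ℤ)+k) := by
    apply X_pow_congr; intro hge hle; omega
  have h3 : (X:ℤ[X]) ^ (((2*(n:ℤ)+1+1) - ((n:ℤ)+k+1)).toNat + Tz k) *
      BZ (2*n) ((n:ℤ)+(k-1))
      = X ^ (n+1 + Tz (k-1)) * BZ (2*n) ((n:ℤ)+(k-1)) := by
    apply X_pow_congr; intro hge hle; omega
  linear_combination (norm := ring_nf) h1 + h2 + h3

/-! ### The sums V and W -/

/-- generic term of our sums -/
noncomputable def gt' (n : ℕ) (f : ℤ → ℤ) (k : ℤ) : Polynomial ℤ :=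
  C (f k) * (BZ (2*n) ((n:ℤ)+k) * X ^ Tz k)

lemma gt'_zero {n : ℕ} (f : ℤ → ℤ) {k : ℤ} (hk : k < -(n:ℤ) ∨ (n:ℤ) < k) :
    gt' n f k = 0 := by
  have : BZ (2*n) ((n:ℤ)+k) = 0 := by
    rcases hk with h | h
    · exact BZ_of_neg (by omega) _
    · exact BZ_of_gt (by push_cast; omega)
  rw [gt', this, zero_mul, mul_zero]

lemma sum_gt'_ext (n : ℕ) (f : ℤ → ℤ) {s : Finset ℤ} (hs : Icc (-(n:ℤ)) n ⊆ s) :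
    ∑ k ∈ s, gt' n f k = ∑ k ∈ Icc (-(n:ℤ)) n, gt' n f k := by
  symm
  apply Finset.sum_subset hs
  intro k _ hk
  apply gt'_zero
  simp only [Finset.mem_Icc, not_and_or, not_le] at hk
  tauto

set_option maxHeartbeats 1000000 in
/-- The key recurrence machine. -/
lemma sum_rec (n : ℕ) (f : ℤ → ℤ) :
    ∑ k ∈ Icc (-(n:ℤ)-1) ((n:ℤ)+1), C (f k) * (BZ (2*n+2) ((n:ℤ)+1+k) * X ^ Tz k)
    = X^n * ∑ k ∈ Icc (-(n:ℤ)) n, gt' n (fun j => f (j-1)) k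
      + (1+X^(2*n+1)) * ∑ k ∈ Icc (-(n:ℤ)) n, gt' n f k
      + X^(n+1) * ∑ k ∈ Icc (-(n:ℤ)) n, gt' n (fun j => f (j+1)) k := by
  have hJ : Icc (-(n:ℤ)-1) ((n:ℤ)+1) ⊆ Icc (-(n:ℤ)-2) ((n:ℤ)+2) := by
    apply Finset.Icc_subset_Icc <;> omega
  have ext : ∑ k ∈ Icc (-(n:ℤ)-1) ((n:ℤ)+1), C (f k) * (BZ (2*n+2) ((n:ℤ)+1+k) * X ^ Tz k)
      = ∑ k ∈ Icc (-(n:ℤ)-2) ((n:ℤ)+2), C (f k) * (BZ (2*n+2) ((n:ℤ)+1+k) * X ^ Tz k) := by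
    apply Finset.sum_subset hJ
    intro k hk hk2
    simp only [Finset.mem_Icc, not_and_or, not_le] at hk2
    have : BZ (2*n+2) ((n:ℤ)+1+k) = 0 := by
      rcases hk2 with h | h
      · exact BZ_of_neg (by omega) _
      · exact BZ_of_gt (by push_cast; omega)
    rw [this, zero_mul, mul_zero]
  rw [ext]
  have split : ∀ k ∈ Icc (-(n:ℤ)-2) ((n:ℤ)+2),
      C (f k) * (BZ (2*n+2) ((n:ℤ)+1+k) * X ^ Tz k)
      = X^n * (C (f k) * (BZ (2*n) ((n:ℤ)+(k+1)) * X ^ Tz (k+1)))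
        + (1+X^(2*n+1)) * (C (f k) * (BZ (2*n) ((n:ℤ)+k) * X ^ Tz k))
        + X^(n+1) * (C (f k) * (BZ (2*n) ((n:ℤ)+(k-1)) * X ^ Tz (k-1))) := by
    intro k _
    rw [three_term n k]
    ring
  rw [Finset.sum_congr rfl split, Finset.sum_add_distrib, Finset.sum_add_distrib]
  -- first sum
  have r1 : ∑ k ∈ Icc (-(n:ℤ)-2) ((n:ℤ)+2),
      X^n * (C (f k) * (BZ (2*n) ((n:ℤ)+(k+1)) * X ^ Tz (k+1)))
      = X^n * ∑ k ∈ Icc (-(n:ℤ)) n, gt' n (fun j => f (j-1)) k := by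
    rw [← Finset.mul_sum]
    congr 1
    rw [← sum_gt'_ext n (fun j => f (j-1)) (s := Icc (-(n:ℤ)-1) ((n:ℤ)+3))
      (Finset.Icc_subset_Icc (by omega) (by omega))]
    rw [show Icc (-(n:ℤ)-1) ((n:ℤ)+3) = Finset.map (addRightEmbedding 1)
      (Icc (-(n:ℤ)-2) ((n:ℤ)+2)) from by rw [Finset.map_add_right_Icc]; congr 1 <;> ring,
      Finset.sum_map]
    apply Finset.sum_congr rfl
    intro k _
    simp only [addRightEmbedding_apply, gt']
    rw [show k + 1 - 1 = k by ring]
  -- second sum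
  have r2 : ∑ k ∈ Icc (-(n:ℤ)-2) ((n:ℤ)+2),
      (1+X^(2*n+1)) * (C (f k) * (BZ (2*n) ((n:ℤ)+k) * X ^ Tz k))
      = (1+X^(2*n+1)) * ∑ k ∈ Icc (-(n:ℤ)) n, gt' n f k := by
    rw [← Finset.mul_sum]
    congr 1
    exact sum_gt'_ext n f (Finset.Icc_subset_Icc (by omega) (by omega))
  -- third sum
  have r3 : ∑ k ∈ Icc (-(n:ℤ)-2) ((n:ℤ)+2),
      X^(n+1) * (C (f k) * (BZ (2*n) ((n:ℤ)+(k-1)) * X ^ Tz (k-1)))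
      = X^(n+1) * ∑ k ∈ Icc (-(n:ℤ)) n, gt' n (fun j => f (j+1)) k := by
    rw [← Finset.mul_sum]
    congr 1
    rw [← sum_gt'_ext n (fun j => f (j+1)) (s := Icc (-(n:ℤ)-3) ((n:ℤ)+1))
      (Finset.Icc_subset_Icc (by omega) (by omega))]
    rw [show Icc (-(n:ℤ)-3) ((n:ℤ)+1) = Finset.map (addRightEmbedding (-1))
      (Icc (-(n:ℤ)-2) ((n:ℤ)+2)) from by rw [Finset.map_add_right_Icc]; congr 1 <;> ring,
      Finset.sum_map]
    apply Finset.sum_congr rfl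
    intro k _
    simp only [addRightEmbedding_apply, gt']
    rw [show k + -1 + 1 = k by ring, show k + -1 = k - 1 by ring]
  rw [r1, r2, r3]

/-- sign function -/
def sg (k : ℤ) : ℤ := if Even k then 1 else -1

lemma sg_succ (k : ℤ) : sg (k+1) = - sg k := by
  unfold sg
  by_cases h : Even k
  · rw [if_pos h, if_neg (by simpa [Int.even_add_one] using h)]
  · rw [if_neg h, if_pos (by simpa [Int.even_add_one] using h), neg_neg]

lemma sg_pred (k : ℤ) : sg (k-1) = - sg k := by
  have := sg_succ (k-1)
  rw [sub_add_cancel] at this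
  omega

def wg (k : ℤ) : ℤ := sg k * (2*k+1)

noncomputable def Vs (n : ℕ) : Polynomial ℤ := ∑ k ∈ Icc (-(n:ℤ)) n, gt' n sg k
noncomputable def Ws (n : ℕ) : Polynomial ℤ := ∑ k ∈ Icc (-(n:ℤ)) n, gt' n wg k

lemma Vs_zero : Vs 0 = 1 := by
  rw [Vs]
  norm_num
  rw [gt']
  norm_num [sg, Tz, BZ_of_nonneg le_rfl]

lemma Ws_zero : Ws 0 = 1 := by
  rw [Ws]
  norm_num
  rw [gt']
  norm_num [wg, sg, Tz, BZ_of_nonneg le_rfl]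

lemma Vs_cast_succ (n : ℕ) :
    Vs (n+1) = ∑ k ∈ Icc (-(n:ℤ)-1) ((n:ℤ)+1), C (sg k) * (BZ (2*n+2) ((n:ℤ)+1+k) * X ^ Tz k) := by
  rw [Vs]
  apply Finset.sum_congr
  · congr 1 <;> push_cast <;> ring
  · intro k _
    rw [gt']
    congr 2 <;> push_cast <;> ring_nf

lemma Ws_cast_succ (n : ℕ) :
    Ws (n+1) = ∑ k ∈ Icc (-(n:ℤ)-1) ((n:ℤ)+1), C (wg k) * (BZ (2*n+2) ((n:ℤ)+1+k) * X ^ Tz k) := by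
  rw [Ws]
  apply Finset.sum_congr
  · congr 1 <;> push_cast <;> ring
  · intro k _
    rw [gt']
    congr 2 <;> push_cast <;> ring_nf

lemma Vs_succ (n : ℕ) : Vs (n+1) = (1 - X^n) * (1 - X^(n+1)) * Vs n := by
  rw [Vs_cast_succ, sum_rec]
  have e1 : ∀ k ∈ Icc (-(n:ℤ)) n, gt' n (fun j => sg (j-1)) k = - gt' n sg k := by
    intro k _
    rw [gt', gt', sg_pred, map_neg]
    ring
  have e2 : ∀ k ∈ Icc (-(n:ℤ)) n, gt' n (fun j => sg (j+1)) k = - gt' n sg k := by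
    intro k _
    rw [gt', gt', sg_succ, map_neg]
    ring
  rw [Finset.sum_congr rfl e1, Finset.sum_congr rfl e2, Finset.sum_neg_distrib]
  rw [← Vs]
  ring

lemma Ws_succ (n : ℕ) : Ws (n+1)
    = (1 - X^n) * (1 - X^(n+1)) * Ws n + (2*X^n - 2*X^(n+1)) * Vs n := by
  rw [Ws_cast_succ, sum_rec]
  have e1 : ∀ k ∈ Icc (-(n:ℤ)) n, gt' n (fun j => wg (j-1)) k
      = - gt' n wg k + C 2 * gt' n sg k := by
    intro k _
    rw [gt', gt', gt']
    have : wg (k-1) = - wg k + 2 * sg k := by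
      rw [wg, wg, sg_pred]
      ring
    rw [this, map_add, map_neg, map_mul]
    ring
  have e2 : ∀ k ∈ Icc (-(n:ℤ)) n, gt' n (fun j => wg (j+1)) k
      = - gt' n wg k - C 2 * gt' n sg k := by
    intro k _
    rw [gt', gt', gt']
    have : wg (k+1) = - wg k - 2 * sg k := by
      rw [wg, wg, sg_succ]
      ring
    rw [this, map_sub, map_neg, map_mul]
    ring
  rw [Finset.sum_congr rfl e1, Finset.sum_congr rfl e2]
  simp only [Finset.sum_add_distrib, Finset.sum_sub_distrib, Finset.sum_neg_distrib, ← Finset.mul_sum]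
  rw [← Vs, ← Ws, show (C 2 : ℤ[X]) = 2 from by norm_num]
  ring

lemma Vs_eq_zero (n : ℕ) : Vs (n+1) = 0 := by
  induction n with
  | zero => rw [Vs_succ, pow_zero, sub_self, zero_mul, zero_mul]
  | succ n ih => rw [Vs_succ, ih, mul_zero]

lemma Ws_eq (n : ℕ) : Ws (n+1) = 2 * qfac (n+1) * qfac n := by
  induction n with
  | zero =>
    rw [Ws_succ, Vs_zero, Ws_zero, qfac_succ 0, qfac_zero]
    ring
  | succ n ih =>
    rw [Ws_succ, ih, Vs_eq_zero n, mul_zero, add_zero, qfac_succ (n+1), qfac_succ n]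
    ring

/-! ### The truncated cube identity -/

lemma qfac_coeff_zero (n : ℕ) : (qfac n).coeff 0 = 1 := by
  rw [Polynomial.coeff_zero_eq_eval_zero, qfac, Polynomial.eval_prod]
  rw [Finset.prod_eq_one]
  intro j _
  simp

lemma X_not_dvd_qfac (n : ℕ) : ¬ (X:ℤ[X]) ∣ qfac n := by
  rw [Polynomial.X_dvd_iff, qfac_coeff_zero]
  norm_num

lemma qfac_sub_dvd {M a b : ℕ} (ha : M ≤ a) (hab : a ≤ b) :
    (X:ℤ[X])^(M+1) ∣ qfac b - qfac a := by
  induction b with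
  | zero => rw [show a = 0 by omega, sub_self]; exact dvd_zero _
  | succ b ih =>
    rcases Nat.eq_or_lt_of_le hab with h | h
    · rw [h, sub_self]; exact dvd_zero _
    · have hb : a ≤ b := by omega
      have : qfac (b+1) - qfac a = (qfac b - qfac a) + (- X^(b+1)) * qfac b := by
        rw [qfac_succ]
        ring
      rw [this]
      exact dvd_add (ih hb) (Dvd.dvd.mul_right
        ((pow_dvd_pow (X:ℤ[X]) (by omega)).neg_right) _)

lemma sg_natCast (k : ℕ) : sg (k:ℤ) = (-1)^k := by
  induction k with
  | zero => rfl
  | succ k ih =>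
    rw [show ((k+1:ℕ):ℤ) = (k:ℤ)+1 by push_cast; ring, sg_succ, ih, pow_succ]
    ring

lemma Tz_natCast (k : ℕ) : Tz (k:ℤ) = k*(k+1)/2 := by
  have h1 : (k*(k+1)/2)*2 = k*(k+1) := Nat.div_mul_cancel (Nat.even_mul_succ_self k).two_dvd
  have h2 := Tz_cast (k:ℤ)
  have h3 : ((k:ℤ))*((k:ℤ)+1) = ((k*(k+1) : ℕ) : ℤ) := by push_cast; ring
  rw [h3] at h2
  omega

noncomputable def Htheta (M : ℕ) : Polynomial ℤ :=
  ∑ k ∈ Finset.range (M+1), C ((-1)^k * (2*k+1) : ℤ) * X^(k*(k+1)/2)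

lemma Tri_ge (k : ℕ) : k ≤ k*(k+1)/2 := by
  rcases Nat.eq_zero_or_pos k with h | h
  · simp [h]
  · rw [Nat.le_div_iff_mul_le (by norm_num)]
    nlinarith

lemma Htheta_sub_dvd {M a b : ℕ} (ha : M ≤ a) (hab : a ≤ b) :
    (X:ℤ[X])^(M+1) ∣ Htheta b - Htheta a := by
  rw [Htheta, Htheta, ← Finset.sum_range_add_sum_Ico _ (by omega : a+1 ≤ b+1),
    add_sub_cancel_left]
  apply Finset.dvd_sum
  intro k hk
  rw [Finset.mem_Ico] at hk
  apply Dvd.dvd.mul_left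
  apply pow_dvd_pow
  have := Tri_ge k
  omega

/-- The truncated Jacobi cube identity. -/
theorem cube_trunc (M : ℕ) : (X:ℤ[X])^(M+1) ∣ qfac M ^ 3 - Htheta M := by
  set n : ℕ := 2*M+2 with hn
  set A : ℤ[X] := Bq (2*n) n with hA
  -- Step 1: Ws n ≡ A * Ghat
  set Ghat : ℤ[X] := ∑ k ∈ Icc (-(n:ℤ)) n, C (wg k) * X ^ Tz k with hG
  have step1 : (X:ℤ[X])^(M+1) ∣ Ws n - A * Ghat := by
    rw [Ws, hG, Finset.mul_sum, ← Finset.sum_sub_distrib]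
    apply Finset.dvd_sum
    intro k hk
    rw [Finset.mem_Icc] at hk
    have : gt' n wg k - A * (C (wg k) * X ^ Tz k)
        = (C (wg k) * X ^ Tz k) * (BZ (2*n) ((n:ℤ)+k) - A) := by
      rw [gt']
      ring
    rw [this]
    rcases le_or_gt k.natAbs (M+1) with hcase | hcase
    · -- use central stabilization
      apply Dvd.dvd.mul_left
      have hin : BZ (2*n) ((n:ℤ)+k) = Bq (2*n) ((n:ℤ)+k).toNat :=
        BZ_of_nonneg (by omega) _
      rw [hin, hA]
      apply Bq_central_dvd n (((n:ℤ)+k).toNat) (M+1) <;> omega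
    · -- Tz k is large
      have hT : M+1 ≤ Tz k := by
        have := Tz_ge k
        omega
      have : (X:ℤ[X])^(M+1) ∣ X ^ Tz k := pow_dvd_pow _ hT
      exact ((this.mul_left _).mul_right _)
  -- Step 2: convert halves to Htheta
  have conv : ∀ m : ℕ, ∑ k ∈ Icc (0:ℤ) ((m:ℤ)), C (wg k) * X ^ Tz k = Htheta m := by
    intro m
    rw [Htheta]
    apply Finset.sum_nbij' (fun k : ℤ => k.toNat) (fun k : ℕ => (k:ℤ))
    · intro k hk; rw [Finset.mem_Icc] at hk; rw [Finset.mem_range]; omega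
    · intro k hk; rw [Finset.mem_range] at hk; rw [Finset.mem_Icc]
      constructor
      · positivity
      · omega
    · intro k hk; rw [Finset.mem_Icc] at hk; omega
    · intro k _; simp
    · intro k hk
      rw [Finset.mem_Icc] at hk
      obtain ⟨j, rfl⟩ : ∃ j:ℕ, k = (j:ℤ) := ⟨k.toNat, by omega⟩
      rw [wg, sg_natCast, Tz_natCast, Int.toNat_natCast]
  have pair : ∑ k ∈ Icc (-(n:ℤ)) (-1), C (wg k) * X ^ Tz k
      = Htheta (n-1) := by
    rw [← conv (n-1)]
    apply Finset.sum_nbij' (fun k : ℤ => -1 - k) (fun k : ℤ => -1 - k)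
    · intro k hk; rw [Finset.mem_Icc] at *
      constructor
      · omega
      · push_cast
        omega
    · intro k hk; rw [Finset.mem_Icc] at *
      push_cast at hk ⊢
      omega
    · intro k _; ring
    · intro k _; ring
    · intro k _
      have hw : wg (-1 - k) = wg k := by
        rw [wg, wg, show (-1 - k) = -(k+1) by ring]
        have hsg : sg (-(k+1)) = sg (k+1) := by simp only [sg, even_neg]
        rw [hsg, sg_succ]
        ring
      have hT : Tz (-1 - k) = Tz k := by
        rw [show (-1 - k) = -(k+1) by ring, Tz_neg]
      rw [hw, hT]
  have split2 : Ghat = Htheta (n-1) + Htheta n := by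
    rw [hG, show Icc (-(n:ℤ)) (n:ℤ) = Icc (-(n:ℤ)) (-1) ∪ Icc (0:ℤ) (n:ℤ) from ?u,
      Finset.sum_union ?d, pair, conv n]
    case u =>
      ext x
      simp only [Finset.mem_Icc, Finset.mem_union]
      omega
    case d =>
      rw [Finset.disjoint_left]
      intro x hx hx2
      rw [Finset.mem_Icc] at *
      omega
  -- Step 4: combine
  have hWs : Ws n = 2 * qfac n * qfac (n-1) := by
    have := Ws_eq (n-1)
    rw [show n-1+1 = n from by omega] at this
    exact this
  have step4 : (X:ℤ[X])^(M+1) ∣ 2 * qfac n * qfac (n-1) - A * (2 * Htheta M) := by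
    have h1 : (X:ℤ[X])^(M+1) ∣ A * (Htheta (n-1) + Htheta n) - A * (2 * Htheta M) := by
      have : A * (Htheta (n-1) + Htheta n) - A * (2 * Htheta M)
          = A * (Htheta (n-1) - Htheta M) + A * (Htheta n - Htheta M) := by ring
      rw [this]
      exact dvd_add ((Htheta_sub_dvd (by omega) (by omega)).mul_left A)
        ((Htheta_sub_dvd (by omega) (by omega)).mul_left A)
    have := dvd_add step1 h1
    rw [hWs, split2] at this
    simpa using this
  -- Step 5: cancel the 2
  have step5 : (X:ℤ[X])^(M+1) ∣ qfac n * qfac (n-1) - A * Htheta M := by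
    rw [Polynomial.X_pow_dvd_iff]
    intro d hd
    rw [show (2:ℤ[X]) * qfac n * qfac (n-1) - A * (2 * Htheta M)
        = 2 * (qfac n * qfac (n-1) - A * Htheta M) from by ring,
      Polynomial.X_pow_dvd_iff] at step4
    have := step4 d hd
    rw [Polynomial.coeff_ofNat_mul] at this
    omega
  -- Step 6: multiply by qfac n ^ 2 and use the product identity
  have hprod : qfac n * qfac n * A = qfac (2*n) := by
    have := qfac_prod_Bq (2*n) n (by omega)
    rw [show 2*n - n = n from by omega] at this
    rw [hA]
    exact this
  have step6 : (X:ℤ[X])^(M+1) ∣ qfac n ^3 * qfac (n-1) - qfac (2*n) * Htheta M := by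
    have := step5.mul_left (qfac n * qfac n)
    have e : qfac n * qfac n * (qfac n * qfac (n-1) - A * Htheta M)
        = qfac n ^3 * qfac (n-1) - (qfac n * qfac n * A) * Htheta M := by ring
    rw [e, hprod] at this
    exact this
  -- Step 7: stabilize all qfac to qfac n
  have step7 : (X:ℤ[X])^(M+1) ∣ qfac n * (qfac n ^3 - Htheta M) := by
    have d1 : (X:ℤ[X])^(M+1) ∣ qfac n ^3 * (qfac n - qfac (n-1)) :=
      (qfac_sub_dvd (by omega) (by omega)).mul_left _
    have d2 : (X:ℤ[X])^(M+1) ∣ (qfac (2*n) - qfac n) * Htheta M :=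
      (qfac_sub_dvd (by omega) (by omega)).mul_right _
    have e : qfac n * (qfac n ^3 - Htheta M)
        = (qfac n ^3 * qfac (n-1) - qfac (2*n) * Htheta M)
          + qfac n ^3 * (qfac n - qfac (n-1)) + (qfac (2*n) - qfac n) * Htheta M := by
      ring
    rw [e]
    exact dvd_add (dvd_add step6 d1) d2
  -- Step 8: cancel qfac n
  have step8 : (X:ℤ[X])^(M+1) ∣ qfac n ^3 - Htheta M :=
    (Polynomial.prime_X).pow_dvd_of_dvd_mul_left _ (X_not_dvd_qfac n) step7
  -- Step 9: replace qfac n by qfac M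
  have d3 : (X:ℤ[X])^(M+1) ∣ qfac M ^3 - qfac n ^3 := by
    have : qfac M ^3 - qfac n ^3 = (qfac M - qfac n) *
        (qfac M ^2 + qfac M * qfac n + qfac n ^2) := by ring
    rw [this, ← neg_sub (qfac n) (qfac M)]
    exact ((qfac_sub_dvd (le_refl M) (by omega)).neg_right).mul_right _
  have e : qfac M ^3 - Htheta M = (qfac M ^3 - qfac n ^3) + (qfac n ^3 - Htheta M) := by
    ring
  rw [e]
  exact dvd_add d3 step8

lemma aeval_qfac (N : ℕ) :
    Polynomial.aeval ((PowerSeries.X : PowerSeries ℤ)^2) (qfac N) = etaTrunc 2 N := by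
  rw [qfac, etaTrunc, map_prod]
  apply Finset.prod_congr rfl
  intro j _
  rw [map_sub, map_one, map_pow, Polynomial.aeval_X, ← pow_mul]

lemma arith7 {j k m : ℕ} (hm : m % 7 = 3) (h : j*(j+1) + k*(k+1) = m) :
    (7:ℤ) ∣ ((-1)^j * (2*(j:ℤ)+1)) * ((-1)^k * (2*(k:ℤ)+1)) := by
  have key : ∀ x y : ZMod 7, x^2 + y^2 = 0 → x * y = 0 := by decide
  have h1 : (2*(j:ℤ)+1)^2 + (2*(k:ℤ)+1)^2 = 4*(m:ℤ) + 2 := by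
    have h' : ((j*(j+1) + k*(k+1) : ℕ) : ℤ) = (m:ℤ) := by exact_mod_cast h
    push_cast at h'
    nlinarith [h']
  have hc : (((2*(j:ℤ)+1)^2 + (2*(k:ℤ)+1)^2 : ℤ) : ZMod 7) = 0 := by
    rw [h1, ZMod.intCast_zmod_eq_zero_iff_dvd]
    obtain ⟨t, rfl⟩ : ∃ t, m = 7*t+3 := ⟨m/7, by omega⟩
    exact ⟨4*(t:ℤ)+2, by push_cast; ring⟩
  have h2 : ((2*(j:ℤ)+1 :ℤ) : ZMod 7)^2 + ((2*(k:ℤ)+1 :ℤ) : ZMod 7)^2 = 0 := by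
    calc ((2*(j:ℤ)+1 :ℤ) : ZMod 7)^2 + ((2*(k:ℤ)+1 :ℤ) : ZMod 7)^2
        = (((2*(j:ℤ)+1)^2 + (2*(k:ℤ)+1)^2 : ℤ) : ZMod 7) := by push_cast; ring
      _ = 0 := hc
  have h3 := key _ _ h2
  have h4 : (((2*(j:ℤ)+1) * (2*(k:ℤ)+1) : ℤ) : ZMod 7) = 0 := by
    push_cast
    push_cast at h3
    linear_combination h3
  rw [ZMod.intCast_zmod_eq_zero_iff_dvd] at h4
  have e : ((-1:ℤ)^j * (2*(j:ℤ)+1)) * ((-1)^k * (2*(k:ℤ)+1))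
      = ((-1)^j*(-1)^k) * ((2*(j:ℤ)+1) * (2*(k:ℤ)+1)) := by ring
  rw [e]
  exact Dvd.dvd.mul_left (by exact_mod_cast h4) _

lemma aeval_C_int (r : ℤ) :
    Polynomial.aeval ((PowerSeries.X : PowerSeries ℤ)^2) (Polynomial.C r)
    = PowerSeries.C r := by
  rw [Polynomial.aeval_C]
  exact RingHom.congr_fun (RingHom.ext_int _ _) r

lemma seven_dvd_coeff {m : ℕ} (hm : m % 7 = 3) :
    (7:ℤ) ∣ PowerSeries.coeff m (etaTrunc 2 m ^ 6) := by
  obtain ⟨g, hg⟩ := cube_trunc m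
  have hg' : qfac m ^ 3 = Htheta m + Polynomial.X^(m+1) * g := by linear_combination hg
  set HH : PowerSeries ℤ :=
    ∑ k ∈ Finset.range (m+1),
      PowerSeries.C ((-1)^k * (2*(k:ℤ)+1)) * (PowerSeries.X : PowerSeries ℤ)^(k*(k+1))
    with hHH
  have hHt : Polynomial.aeval ((PowerSeries.X : PowerSeries ℤ)^2) (Htheta m) = HH := by
    rw [Htheta, map_sum, hHH]
    apply Finset.sum_congr rfl
    intro k _
    rw [map_mul, map_pow, Polynomial.aeval_X, ← pow_mul, aeval_C_int]
    congr 2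
    have : (k*(k+1)/2)*2 = k*(k+1) := Nat.div_mul_cancel (Nat.even_mul_succ_self k).two_dvd
    omega
  have key : etaTrunc 2 m ^ 3
      = HH + (PowerSeries.X : PowerSeries ℤ)^(2*(m+1))
          * Polynomial.aeval ((PowerSeries.X : PowerSeries ℤ)^2) g := by
    have h5 := congrArg (Polynomial.aeval ((PowerSeries.X : PowerSeries ℤ)^2)) hg'
    rw [map_pow, aeval_qfac, map_add, map_mul, map_pow, Polynomial.aeval_X, ← pow_mul,
      hHt] at h5
    exact h5
  have dvd6 : (PowerSeries.X : PowerSeries ℤ)^(m+1) ∣ etaTrunc 2 m ^ 6 - HH^2 := by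
    have e : etaTrunc 2 m ^ 6 - HH^2
        = (etaTrunc 2 m ^3 - HH) * (etaTrunc 2 m ^3 + HH) := by ring
    rw [e, key]
    have e2 : HH + (PowerSeries.X : PowerSeries ℤ)^(2*(m+1))
          * Polynomial.aeval ((PowerSeries.X : PowerSeries ℤ)^2) g - HH
        = (PowerSeries.X : PowerSeries ℤ)^(2*(m+1))
          * Polynomial.aeval ((PowerSeries.X : PowerSeries ℤ)^2) g := by ring
    rw [e2]
    exact (Dvd.dvd.mul_right (Dvd.dvd.mul_right (pow_dvd_pow _ (by omega)) _) _)
  have ceq : PowerSeries.coeff m (etaTrunc 2 m ^ 6) = PowerSeries.coeff m (HH^2) := by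
    rw [PowerSeries.X_pow_dvd_iff] at dvd6
    have h6 := dvd6 m (by omega)
    rw [map_sub] at h6
    linarith [h6]
  rw [ceq, pow_two, hHH, Finset.sum_mul_sum, map_sum]
  apply Finset.dvd_sum
  intro j _
  rw [map_sum]
  apply Finset.dvd_sum
  intro k _
  set aj : ℤ := (-1)^j * (2*(j:ℤ)+1) with haj
  set ak : ℤ := (-1)^k * (2*(k:ℤ)+1) with hak
  have e : (PowerSeries.C aj * (PowerSeries.X : PowerSeries ℤ)^(j*(j+1)))
        * (PowerSeries.C ak * (PowerSeries.X : PowerSeries ℤ)^(k*(k+1)))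
      = PowerSeries.C (aj * ak)
        * (PowerSeries.X : PowerSeries ℤ)^(j*(j+1) + k*(k+1)) := by
    rw [mul_mul_mul_comm, ← map_mul, ← pow_add]
  rw [e, PowerSeries.coeff_C_mul, PowerSeries.coeff_X_pow]
  by_cases hc : m = j*(j+1) + k*(k+1)
  · rw [if_pos hc, mul_one]
    exact arith7 hm hc.symm
  · rw [if_neg hc, mul_zero]
    exact dvd_zero _

/-! ### Mod 7 endgame -/

lemma charP7 : CharP (PowerSeries (ZMod 7)) 7 := by
  constructor
  intro x
  rw [← map_natCast (PowerSeries.C (R := ZMod 7)) x]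
  constructor
  · intro h
    have h2 := congrArg (PowerSeries.constantCoeff (R := ZMod 7)) h
    rw [PowerSeries.constantCoeff_C, map_zero] at h2
    exact (ZMod.natCast_eq_zero_iff x 7).mp h2
  · intro h
    have : ((x:ℕ) : ZMod 7) = 0 := (ZMod.natCast_eq_zero_iff x 7).mpr h
    rw [this, map_zero]

lemma frob7 (N : ℕ) :
    (PowerSeries.map (Int.castRingHom (ZMod 7)) (etaTrunc 1 N))^7
    = PowerSeries.map (Int.castRingHom (ZMod 7)) (etaTrunc 7 N) := by
  haveI : CharP (PowerSeries (ZMod 7)) 7 := charP7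
  haveI : Fact (Nat.Prime 7) := ⟨by norm_num⟩
  rw [etaTrunc, etaTrunc, map_prod, map_prod, ← Finset.prod_pow]
  apply Finset.prod_congr rfl
  intro j _
  rw [map_sub, map_sub, map_one, map_pow, map_pow, PowerSeries.map_X,
    sub_pow_char (p := 7), one_pow, ← pow_mul]
  congr 2
  ring

lemma supp7 (N : ℕ) : ∀ i, ¬ (7 ∣ i) →
    PowerSeries.coeff i
      (PowerSeries.map (Int.castRingHom (ZMod 7)) (etaTrunc 7 N)) = 0 := by
  have hmap : PowerSeries.map (Int.castRingHom (ZMod 7)) (etaTrunc 7 N)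
      = ∏ j ∈ Finset.range N, (1 - (PowerSeries.X : PowerSeries (ZMod 7)) ^ (7 * (j + 1))) := by
    rw [etaTrunc, map_prod]
    apply Finset.prod_congr rfl
    intro j _
    rw [map_sub, map_one, map_pow, PowerSeries.map_X]
  rw [hmap]
  apply Finset.prod_induction _ (fun F => ∀ i, ¬ (7 ∣ i) → PowerSeries.coeff i F = 0)
  · intro F G hF hG i hi
    rw [PowerSeries.coeff_mul]
    apply Finset.sum_eq_zero
    intro x hx
    rw [Finset.HasAntidiagonal.mem_antidiagonal] at hx
    by_cases h1 : 7 ∣ x.1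
    · have h2 : ¬ 7 ∣ x.2 := by omega
      rw [hG x.2 h2, mul_zero]
    · rw [hF x.1 h1, zero_mul]
  · intro i hi
    rw [PowerSeries.coeff_one, if_neg (by omega)]
  · intro j _ i hi
    rw [map_sub, PowerSeries.coeff_one, PowerSeries.coeff_X_pow,
      if_neg (by omega), if_neg (by omega), sub_zero]

theorem stmt_5 (a : ℕ → ℤ) (ha : IsGF 7 a) :
    ∀ n : ℕ, (7 : ℤ) ∣ a (7 * n + 3) := by
  intro n
  induction n using Nat.strong_induction_on with
  | _ n ih =>
  set φ := Int.castRingHom (ZMod 7) with hφ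
  set m := 7*n+3 with hm
  have hrel := ha m m le_rfl
  have hmap : PowerSeries.coeff m
        (PowerSeries.map φ (etaTrunc 1 m ^ 7 * PowerSeries.mk a))
      = PowerSeries.coeff m (PowerSeries.map φ (etaTrunc 2 m ^ (7-1))) := by
    rw [PowerSeries.coeff_map, PowerSeries.coeff_map, hrel]
  rw [map_mul, map_pow, frob7] at hmap
  -- RHS is zero
  have hR : PowerSeries.coeff m (PowerSeries.map φ (etaTrunc 2 m ^ (7-1))) = 0 := by
    rw [PowerSeries.coeff_map]
    have := seven_dvd_coeff (m := m) (by omega)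
    show φ _ = 0
    rw [hφ]
    simp only [Int.coe_castRingHom]
    rw [ZMod.intCast_zmod_eq_zero_iff_dvd]
    exact_mod_cast this
  rw [hR, PowerSeries.coeff_mul] at hmap
  -- all terms except (0, m) vanish
  have hsingle : ∑ p ∈ Finset.HasAntidiagonal.antidiagonal m,
        PowerSeries.coeff p.1 (PowerSeries.map φ (etaTrunc 7 m)) *
        PowerSeries.coeff p.2 (PowerSeries.map φ (PowerSeries.mk a))
      = ((a m : ℤ) : ZMod 7) := by
    rw [Finset.sum_eq_single ((0:ℕ), m)]
    · have hc0 : PowerSeries.coeff 0 (PowerSeries.map φ (etaTrunc 7 m)) = 1 := by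
        rw [PowerSeries.coeff_map, PowerSeries.coeff_zero_eq_constantCoeff, etaTrunc, map_prod]
        rw [Finset.prod_eq_one]
        · rw [map_one]
        · intro j _
          rw [map_sub, map_one, map_pow, PowerSeries.constantCoeff_X,
            zero_pow (by omega), sub_zero]
      rw [hc0, one_mul, PowerSeries.coeff_map, PowerSeries.coeff_mk]
      rfl
    · intro b hb hbne
      rw [Finset.HasAntidiagonal.mem_antidiagonal] at hb
      by_cases h1 : 7 ∣ b.1
      · -- b.1 = 7s with s ≥ 1
        have hb1 : b.1 ≠ 0 := by
          intro h0
          exact hbne (Prod.ext_iff.mpr ⟨by omega, by omega⟩)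
        obtain ⟨s, hs⟩ := h1
        have hj : b.2 = 7*(n - s) + 3 := by omega
        have hd := ih (n - s) (by omega)
        have hz : ((a (7*(n-s)+3) : ℤ) : ZMod 7) = 0 :=
          (ZMod.intCast_zmod_eq_zero_iff_dvd _ _).mpr hd
        have h2f : PowerSeries.coeff b.2 (PowerSeries.map φ (PowerSeries.mk a))
            = 0 := by
          rw [PowerSeries.coeff_map, PowerSeries.coeff_mk, hj]
          exact hz
        rw [h2f, mul_zero]
      · rw [supp7 m b.1 h1, zero_mul]
    · intro habs
      exact absurd (Finset.HasAntidiagonal.mem_antidiagonal.mpr (by omega)) habs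
  rw [hsingle] at hmap
  have := (ZMod.intCast_zmod_eq_zero_iff_dvd (a m) 7).mp hmap
  exact_mod_cast this
end

section
/- For all n ≥ 0, a_5(5n+3) ≡ 0 (mod 5), where a_5(n) is defined by ∑_{n≥0} a_5(n) q^n = (q^2;q^2)_∞^4/(q;q)_∞^5. -/
open PowerSeries Finset

noncomputable def qb : ℕ → ℤ → PowerSeries ℤ
  | 0, k => if k = 0 then 1 else 0
  | (n+1), k => X ^ k.toNat * qb n k + qb n (k-1)

lemma qb_succ (n : ℕ) (k : ℤ) : qb (n+1) k = X ^ k.toNat * qb n k + qb n (k-1) := rfl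

@[simp] lemma qb_neg : ∀ (n : ℕ) (k : ℤ), k < 0 → qb n k = 0
  | 0, k, hk => by simp [qb, hk.ne]
  | (n+1), k, hk => by
      rw [qb, qb_neg n k hk, qb_neg n (k-1) (by omega)]; ring

@[simp] lemma qb_zero (n : ℕ) : qb n 0 = 1 := by
  induction n with
  | zero => simp [qb]
  | succ n ih => rw [qb]; simp [ih, qb_neg n (-1) (by norm_num)]

lemma qb_gt : ∀ (n : ℕ) (k : ℤ), (n : ℤ) < k → qb n k = 0
  | 0, k, hk => by simp [qb]; omega
  | (n+1), k, hk => by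
      rw [qb, qb_gt n k (by push_cast at hk ⊢; omega), qb_gt n (k-1) (by push_cast at hk ⊢; omega)]; ring

lemma qb_top : ∀ (n : ℕ), qb n n = 1
  | 0 => by simp
  | (n+1) => by
      rw [qb_succ, qb_gt n (n+1:ℕ) (by push_cast; omega),
        show ((n+1:ℕ):ℤ) - 1 = (n:ℤ) by push_cast; ring, qb_top n]
      ring

/-- Pascal rule P1. -/
lemma qb_pascal1 : ∀ (n : ℕ) (k : ℤ), k ≤ (n:ℤ)+1 →
    qb (n+1) k = qb n k + X ^ ((n:ℤ)+1-k).toNat * qb n (k-1)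
  | 0, k, hk => by
      rcases lt_trichotomy k 0 with h | h | h
      · rw [qb_neg _ _ h, qb_neg _ _ h, qb_neg _ _ (by omega)]; ring
      · subst h; simp [qb_succ]
      · have hk1 : k = 1 := by omega
        subst hk1
        norm_num [qb]
  | (n+1), k, hk => by
      rcases lt_trichotomy k 0 with h | h | h
      · rw [qb_neg _ _ h, qb_neg _ _ h, qb_neg _ _ (by omega)]; ring
      · subst h; simp [qb_neg _ (-1:ℤ) (by norm_num)]
      · push_cast at hk ⊢
        rcases eq_or_lt_of_le hk with h2 | h2
        · -- k = n+2
          rw [h2, show (n:ℤ)+1+1 = ((n+2 : ℕ) : ℤ) by push_cast; ring, qb_top (n+2),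
            qb_gt (n+1) _ (by push_cast; omega),
            show ((n+2:ℕ):ℤ) - 1 = ((n+1:ℕ):ℤ) by push_cast; ring, qb_top (n+1)]
          push_cast
          rw [show ((n:ℤ)+2-((n:ℤ)+2)).toNat = 0 by omega]
          simp
        · -- 0 < k ≤ n+1
          have hkn : k ≤ (n:ℤ) + 1 := by omega
          have hbc : ((n:ℤ)+1-(k-1)).toNat = ((n:ℤ)+1+1-k).toNat := by omega
          have hx : (X:PowerSeries ℤ)^k.toNat * X^((n:ℤ)+1-k).toNat =
              X^((n:ℤ)+1+1-k).toNat * X^(k-1).toNat := by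
            rw [← pow_add, ← pow_add]; congr 1; omega
          calc qb (n+1+1) k = X^k.toNat * qb (n+1) k + qb (n+1) (k-1) := qb_succ _ _
            _ = X^k.toNat * (qb n k + X^((n:ℤ)+1-k).toNat * qb n (k-1)) +
                (qb n (k-1) + X^((n:ℤ)+1-(k-1)).toNat * qb n (k-1-1)) := by
                  rw [qb_pascal1 n k hkn, qb_pascal1 n (k-1) (by omega)]
            _ = (X^k.toNat * qb n k + qb n (k-1)) +
                X^((n:ℤ)+1+1-k).toNat * (X^(k-1).toNat * qb n (k-1) + qb n (k-1-1)) := by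
                  rw [hbc]; linear_combination qb n (k-1) * hx
            _ = qb (n+1) k + X^((n:ℤ)+1+1-k).toNat * qb (n+1) (k-1) := by
                  rw [qb_succ n k, qb_succ n (k-1)]

lemma etaTrunc_succ (k N : ℕ) :
    etaTrunc k (N+1) = etaTrunc k N * (1 - X ^ (k * (N+1))) := by
  rw [etaTrunc, prod_range_succ]; rfl

@[simp] lemma etaTrunc_zero' (k : ℕ) : etaTrunc k 0 = 1 := by simp [etaTrunc]


lemma qb_prod : ∀ (n k : ℕ), k ≤ n →
    qb n k * etaTrunc 1 k * etaTrunc 1 (n-k) = etaTrunc 1 n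
  | 0, k, hk => by
      interval_cases k; simp [qb_zero]
  | (n+1), k, hk => by
      rcases Nat.eq_zero_or_pos k with rfl | hk0
      · push_cast; simp [qb_zero]
      · rcases eq_or_lt_of_le hk with rfl | hlt
        · rw [qb_top, Nat.sub_self]; simp
        · have hkn : k ≤ n := by omega
          obtain ⟨k', rfl⟩ : ∃ k', k = k' + 1 := ⟨k-1, by omega⟩
          rw [qb_pascal1 n ((k'+1:ℕ):ℤ) (by push_cast; omega)]
          have e1 : ((n:ℤ)+1-(k'+1:ℕ)).toNat = n - k' := by push_cast; omega
          have e2 : ((k'+1:ℕ):ℤ) - 1 = (k' : ℕ) := by push_cast; ring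
          rw [e1, e2, add_mul, add_mul]
          have hA : qb n (k'+1:ℕ) * etaTrunc 1 (k'+1) * etaTrunc 1 (n+1-(k'+1)) =
              etaTrunc 1 n * (1 - X ^ (n - k')) := by
            have : n+1-(k'+1) = (n - (k'+1)) + 1 := by omega
            rw [this, etaTrunc_succ 1 (n-(k'+1)), show 1 * ((n-(k'+1))+1) = n - k' by omega,
              ← mul_assoc, mul_comm, ← mul_assoc]
            rw [mul_comm (1 - X ^ (n-k')) _, mul_assoc, mul_comm _ (etaTrunc 1 (n-(k'+1))),
              ← mul_assoc, qb_prod n (k'+1) hkn]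
          have hB : X ^ (n - k') * qb n (k' : ℕ) * etaTrunc 1 (k'+1) * etaTrunc 1 (n+1-(k'+1)) =
              X ^ (n-k') * (1 - X ^ (k'+1)) * etaTrunc 1 n := by
            rw [etaTrunc_succ 1 k', show 1*(k'+1) = k'+1 by ring, show n+1-(k'+1) = n - k' by omega]
            have := qb_prod n k' (by omega)
            calc X ^ (n - k') * qb n (k' : ℕ) * (etaTrunc 1 k' * (1 - X ^ (k'+1))) * etaTrunc 1 (n-k')
                = X ^ (n-k') * (1 - X ^ (k'+1)) * (qb n (k' : ℕ) * etaTrunc 1 k' * etaTrunc 1 (n-k')) := by ring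
              _ = X ^ (n-k') * (1 - X ^ (k'+1)) * etaTrunc 1 n := by rw [this]
          rw [hA, hB, etaTrunc_succ]
          have hxx : (X:PowerSeries ℤ) ^ (n-k') * X ^ k' = X ^ n := by
            rw [← pow_add]; congr 1; omega
          have : 1*(n+1) = n+1 := by ring
          rw [this]
          linear_combination (- etaTrunc 1 n * X) * hxx

/-- triangular-type exponent: `tt j = j(j+1)/2 ≥ 0`. -/
def tt (j : ℤ) : ℕ := (j*(j+1)/2).toNat

lemma tt_two (j : ℤ) : 2 * (tt j : ℤ) = j*(j+1) := by
  have he : 2 ∣ j*(j+1) := (Int.even_mul_succ_self j).two_dvd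
  have hnn : 0 ≤ j*(j+1) := by rcases le_or_gt 0 j with h | h <;> nlinarith
  rw [tt, Int.toNat_of_nonneg (Int.ediv_nonneg hnn (by norm_num))]
  exact Int.mul_ediv_cancel' he

lemma tt_step (j : ℤ) : (tt j : ℤ) = tt (j-1) + j := by
  have h1 := tt_two j; have h2 := tt_two (j-1)
  have : 2*((tt j:ℤ) - tt (j-1) - j) = 0 := by linear_combination h1 - h2
  linarith

lemma tt_nat (m : ℕ) : tt m = m*(m+1)/2 := by
  have h := tt_two (m:ℤ)
  have h2 : ((m*(m+1):ℕ):ℤ) = (m:ℤ)*((m:ℤ)+1) := by push_cast; ring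
  omega

/-- The double-Pascal identity. -/
lemma qb_dp (n : ℕ) (m : ℤ) (h0 : 0 ≤ m) (h2 : m ≤ 2*(n:ℤ)+2) :
    qb (2*n+2) m = X ^ m.toNat * qb (2*n) m + (1 + X^(2*n+1)) * qb (2*n) (m-1)
      + X ^ (2*(n:ℤ)+2-m).toNat * qb (2*n) (m-2) := by
  rcases eq_or_lt_of_le h0 with rfl | hm1
  · norm_num [qb_zero, qb_neg _ (-1:ℤ) (by norm_num), qb_neg _ (-2:ℤ) (by norm_num),
      qb_neg _ (0-1:ℤ) (by norm_num), qb_neg _ (0-2:ℤ) (by norm_num)]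
  · have key : qb (2*n+2) m = qb (2*n+1) m + X ^ (2*(n:ℤ)+2-m).toNat * qb (2*n+1) (m-1) := by
      have h := qb_pascal1 (2*n+1) m (by push_cast; omega)
      rw [show (2*n+1+1) = 2*n+2 by ring] at h
      have e : ((2*n+1:ℕ):ℤ)+1-m = 2*(n:ℤ)+2-m := by push_cast; ring
      rw [h, e]
    rw [key, qb_succ (2*n) m, qb_succ (2*n) (m-1)]
    have hxp : (X:PowerSeries ℤ) ^ (2*(n:ℤ)+2-m).toNat * X ^ (m-1).toNat = X ^ (2*n+1) := by
      rw [← pow_add]; congr 1; omega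
    calc X ^ m.toNat * qb (2*n) m + qb (2*n) (m-1) +
          X ^ (2*(n:ℤ)+2-m).toNat * (X ^ (m-1).toNat * qb (2*n) (m-1) + qb (2*n) (m-1-1))
        = X ^ m.toNat * qb (2*n) m + qb (2*n) (m-1) +
          (X ^ (2*(n:ℤ)+2-m).toNat * X ^ (m-1).toNat) * qb (2*n) (m-1)
          + X ^ (2*(n:ℤ)+2-m).toNat * qb (2*n) (m-2) := by
            rw [show m-1-1 = m-2 by ring]; ring
      _ = _ := by rw [hxp]; ring

/-- weighted Jacobi-type sums -/
noncomputable def Gs (w : ℕ → PowerSeries ℤ) (n : ℕ) : PowerSeries ℤ :=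
  ∑ m ∈ range (2*n+1), (-1)^m * w m * qb (2*n) (m:ℤ) * X ^ tt ((m:ℤ) - n)

lemma Gs_rec (w : ℕ → PowerSeries ℤ) (n : ℕ) :
    Gs w (n+1) = X^n * Gs w n - (1+X^(2*n+1)) * Gs (fun m => w (m+1)) n
      + X^(n+1) * Gs (fun m => w (m+2)) n := by
  have tA : ∀ m : ℕ, (m:ℕ) + tt ((m:ℤ)-n-1) = n + tt ((m:ℤ)-n) := by
    intro m; have := tt_step ((m:ℤ)-n); omega
  have tC : ∀ m : ℕ, m ≤ 2*n+2 →
      (2*(n:ℤ)+2-m).toNat + tt ((m:ℤ)-n-1) = (n+1) + tt ((m:ℤ)-n-2) := by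
    intro m hm; have h := tt_step ((m:ℤ)-n-1)
    simp only [show (m:ℤ)-(n:ℤ)-1-1 = (m:ℤ)-n-2 from by ring] at h
    have hc : ((m:ℤ)) ≤ 2*(n:ℤ)+2 := by push_cast; omega
    omega
  have expand : Gs w (n+1) =
      ∑ m ∈ range (2*n+3),
        ((-1)^m * w m * qb (2*n) (m:ℤ) * (X ^ (m:ℕ) * X ^ tt ((m:ℤ)-n-1))
        + (-1)^m * w m * ((1 + X^(2*n+1)) * qb (2*n) ((m:ℤ)-1)) * X ^ tt ((m:ℤ)-1-n)
        + (-1)^m * w m * qb (2*n) ((m:ℤ)-2) * (X ^ ((2*(n:ℤ)+2-m).toNat) * X ^ tt ((m:ℤ)-n-1))) := by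
    rw [Gs, show 2*(n+1)+1 = 2*n+3 by ring]
    refine Finset.sum_congr rfl (fun m hm => ?_)
    have hm' : (m:ℤ) ≤ 2*(n:ℤ)+2 := by
      have := mem_range.1 hm; push_cast; omega
    rw [show (2*(n+1)) = 2*n+2 by ring, qb_dp n m (by positivity) hm']
    have e0 : ((m:ℤ)).toNat = m := Int.toNat_natCast m
    rw [e0, show ((m:ℤ) - (n+1:ℕ)) = (m:ℤ)-n-1 by push_cast; ring,
      show ((m:ℤ)-1-n) = (m:ℤ)-1-n from rfl]
    ring_nf
    try rw [show (m:ℤ)-1-(n:ℤ) = -1+((m:ℤ)-n) by ring, show (m:ℤ)-(n:ℤ)-1 = -1+((m:ℤ)-n) by ring]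
    try ring
  rw [expand, Finset.sum_add_distrib, Finset.sum_add_distrib]
  have hSA : ∑ m ∈ range (2*n+3), (-1)^m * w m * qb (2*n) (m:ℤ) * (X ^ (m:ℕ) * X ^ tt ((m:ℤ)-n-1))
      = X^n * Gs w n := by
    have per : ∀ m : ℕ, (X:PowerSeries ℤ) ^ (m:ℕ) * X ^ tt ((m:ℤ)-n-1) = X^n * X ^ tt ((m:ℤ)-n) := by
      intro m; rw [← pow_add, ← pow_add, tA m]
    calc ∑ m ∈ range (2*n+3), (-1)^m * w m * qb (2*n) (m:ℤ) * (X ^ (m:ℕ) * X ^ tt ((m:ℤ)-n-1))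
        = ∑ m ∈ range (2*n+3), X^n * ((-1)^m * w m * qb (2*n) (m:ℤ) * X ^ tt ((m:ℤ)-n)) := by
          exact Finset.sum_congr rfl fun m _ => by rw [per m]; try ring
      _ = X^n * ∑ m ∈ range (2*n+3), ((-1)^m * w m * qb (2*n) (m:ℤ) * X ^ tt ((m:ℤ)-n)) := by
          rw [Finset.mul_sum]
      _ = X^n * Gs w n := by
          rw [Gs, sum_range_succ, sum_range_succ (n := 2*n+1)]
          rw [qb_gt (2*n) ((2*n+1:ℕ):ℤ) (by push_cast; omega),
            qb_gt (2*n) ((2*n+2:ℕ):ℤ) (by push_cast; omega)]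
          ring
  have qtop1 : qb (2*n) ((2*n+1:ℕ):ℤ) = 0 := qb_gt _ _ (by push_cast; omega)
  have hSB : ∑ m ∈ range (2*n+3), (-1)^m * w m * ((1 + X^(2*n+1)) * qb (2*n) ((m:ℤ)-1)) * X ^ tt ((m:ℤ)-1-n)
      = -((1+X^(2*n+1)) * Gs (fun m => w (m+1)) n) := by
    rw [Finset.sum_range_succ' _ (2*n+2)]
    have f0 : (-1)^(0:ℕ) * w 0 * ((1 + X^(2*n+1)) * qb (2*n) (((0:ℕ):ℤ)-1)) * X ^ tt (((0:ℕ):ℤ)-1-n) = 0 := by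
      rw [qb_neg (2*n) _ (by norm_num)]; ring
    rw [f0, add_zero]
    have per : ∀ k : ℕ, (-1)^(k+1) * w (k+1) * ((1 + X^(2*n+1)) * qb (2*n) (((k+1:ℕ):ℤ)-1)) * X ^ tt (((k+1:ℕ):ℤ)-1-n)
        = -((1+X^(2*n+1))) * ((-1)^k * w (k+1) * qb (2*n) (k:ℤ) * X ^ tt ((k:ℤ)-n)) := by
      intro k
      rw [show ((k+1:ℕ):ℤ)-1 = (k:ℤ) by push_cast; ring]
      ring
    rw [Finset.sum_congr rfl (fun k _ => per k), ← Finset.mul_sum, sum_range_succ]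
    rw [qtop1]
    rw [Gs]
    ring
  have hSC : ∑ m ∈ range (2*n+3), (-1)^m * w m * qb (2*n) ((m:ℤ)-2) * (X ^ ((2*(n:ℤ)+2-m).toNat) * X ^ tt ((m:ℤ)-n-1))
      = X^(n+1) * Gs (fun m => w (m+2)) n := by
    rw [Finset.sum_range_succ' _ (2*n+2)]
    have f0 : (-1)^(0:ℕ) * w 0 * qb (2*n) (((0:ℕ):ℤ)-2) * (X ^ ((2*(n:ℤ)+2-(0:ℕ)).toNat) * X ^ tt (((0:ℕ):ℤ)-n-1)) = 0 := by
      rw [qb_neg (2*n) _ (by norm_num)]; ring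
    rw [f0, add_zero, Finset.sum_range_succ' _ (2*n+1)]
    have f1 : (-1)^(0+1) * w (0+1) * qb (2*n) (((0+1:ℕ):ℤ)-2) * (X ^ ((2*(n:ℤ)+2-((0+1:ℕ):ℤ)).toNat) * X ^ tt (((0+1:ℕ):ℤ)-n-1)) = 0 := by
      rw [qb_neg (2*n) (((0+1:ℕ):ℤ)-2) (by norm_num)]; ring
    rw [f1, add_zero]
    have per : ∀ k : ℕ, k < 2*n+1 → (-1)^(k+1+1) * w (k+1+1) * qb (2*n) (((k+1+1:ℕ):ℤ)-2) * (X ^ ((2*(n:ℤ)+2-((k+1+1:ℕ):ℤ)).toNat) * X ^ tt (((k+1+1:ℕ):ℤ)-n-1))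
        = X^(n+1) * ((-1)^k * w (k+2) * qb (2*n) (k:ℤ) * X ^ tt ((k:ℤ)-n)) := by
      intro k hk
      have e2 : ((k+1+1:ℕ):ℤ)-2 = (k:ℤ) := by push_cast; ring
      have e3 : (X:PowerSeries ℤ) ^ ((2*(n:ℤ)+2-((k+1+1:ℕ):ℤ)).toNat) * X ^ tt (((k+1+1:ℕ):ℤ)-n-1)
          = X^(n+1) * X ^ tt ((k:ℤ)-n) := by
        rw [← pow_add, ← pow_add]
        have := tC (k+2) (by omega)
        rw [show ((k+1+1:ℕ):ℤ) = ((k+2:ℕ):ℤ) by push_cast; ring,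
          show ((k+2:ℕ):ℤ)-(n:ℤ)-1 = ((k+2:ℕ):ℤ)-n-1 from rfl]
        have e4 : ((k+2:ℕ):ℤ)-(n:ℤ)-2 = (k:ℤ)-n := by push_cast; ring
        rw [e4] at this
        have e5 : (2*(n:ℤ)+2-((k+2:ℕ):ℤ)).toNat + tt (((k+2:ℕ):ℤ)-n-1) = (n+1) + tt ((k:ℤ)-n) := by omega
        rw [e5]
      rw [e2, e3, show k+1+1 = k+2 by ring]
      ring
    rw [Finset.sum_congr rfl (fun k hk => per k (mem_range.1 hk)), ← Finset.mul_sum, Gs]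
  rw [hSA, hSB, hSC]
  ring

noncomputable def Uj (n : ℕ) : PowerSeries ℤ := Gs (fun _ => 1) n
noncomputable def Vj (n : ℕ) : PowerSeries ℤ := Gs (fun m => (m : PowerSeries ℤ)) n

lemma tt_zero : tt 0 = 0 := rfl

lemma Gs_zero (w : ℕ → PowerSeries ℤ) : Gs w 0 = w 0 := by
  rw [Gs]
  simp [qb_zero, tt_zero]

lemma Gs_add (w1 w2 : ℕ → PowerSeries ℤ) (n : ℕ) :
    Gs (fun m => w1 m + w2 m) n = Gs w1 n + Gs w2 n := by
  rw [Gs, Gs, Gs, ← sum_add_distrib]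
  exact sum_congr rfl fun m _ => by ring

lemma Gs_shift1 (n : ℕ) :
    Gs (fun m => ((m+1 : ℕ) : PowerSeries ℤ)) n = Vj n + Uj n := by
  rw [show (fun m => ((m+1:ℕ) : PowerSeries ℤ)) = fun (m:ℕ) => (m : PowerSeries ℤ) + (fun (_:ℕ) => (1:PowerSeries ℤ)) m from ?_, Gs_add]
  · rfl
  · funext m; push_cast; ring

lemma Gs_shift2 (n : ℕ) :
    Gs (fun m => ((m+2 : ℕ) : PowerSeries ℤ)) n = Vj n + 2 * Uj n := by
  have : (fun m => ((m+2:ℕ) : PowerSeries ℤ)) = fun (m:ℕ) => (m : PowerSeries ℤ) + (fun (_:ℕ) => (2:PowerSeries ℤ)) m := by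
    funext m; push_cast; ring
  rw [this, Gs_add]
  have h2 : Gs (fun _ => (2:PowerSeries ℤ)) n = 2 * Uj n := by
    have : (fun (_:ℕ) => (2:PowerSeries ℤ)) = fun (m:ℕ) => (fun (_:ℕ) => (1:PowerSeries ℤ)) m + (fun (_:ℕ) => (1:PowerSeries ℤ)) m := by
      funext m; ring
    rw [this, Gs_add, Uj]; ring
  rw [h2]; rfl

lemma Uj_rec (n : ℕ) : Uj (n+1) = (X^n - (1+X^(2*n+1)) + X^(n+1)) * Uj n := by
  have := Gs_rec (fun _ => 1) n
  rw [Uj, this]; ring_nf; rfl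

lemma Uj_zero' : Uj 0 = 1 := Gs_zero _

lemma Uj_eq_zero : ∀ n, 1 ≤ n → Uj n = 0 := by
  intro n hn
  induction n with
  | zero => omega
  | succ n ih =>
    rcases Nat.eq_zero_or_pos n with rfl | hp
    · rw [Uj_rec, Uj_zero']; ring_nf
    · rw [Uj_rec, ih hp]; ring

lemma Vj_rec (n : ℕ) : Vj (n+1) = (X^n - (1+X^(2*n+1)) + X^(n+1)) * Vj n
    - (1+X^(2*n+1)) * Uj n + X^(n+1) * (2 * Uj n) := by
  have h := Gs_rec (fun m => (m : PowerSeries ℤ)) n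
  have e1 : Gs (fun m => ((m+1 : ℕ) : PowerSeries ℤ)) n = Vj n + Uj n := Gs_shift1 n
  have e2 : Gs (fun m => ((m+2 : ℕ) : PowerSeries ℤ)) n = Vj n + 2 * Uj n := Gs_shift2 n
  have e0 : Gs (fun m => ((m:ℕ) : PowerSeries ℤ)) n = Vj n := rfl
  rw [Vj, h, e0, e1, e2]
  ring

lemma Vj_closed : ∀ n, 1 ≤ n → Vj n = (-1)^n * etaTrunc 1 n * etaTrunc 1 (n-1) := by
  intro n hn
  induction n with
  | zero => omega
  | succ n ih =>
    rcases Nat.eq_zero_or_pos n with rfl | hp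
    · rw [Vj_rec, show Vj 0 = 0 from by rw [Vj, Gs_zero]; norm_num, Uj_zero']
      have h11 : etaTrunc 1 (0+1) = 1 - X := by
        rw [etaTrunc_succ 1 0, etaTrunc_zero' 1]; norm_num
      rw [h11, show (0:ℕ)+1-1 = 0 from rfl, etaTrunc_zero' 1]
      ring_nf
    · rw [Vj_rec, ih hp, Uj_eq_zero n hp]
      obtain ⟨n', rfl⟩ : ∃ n', n = n' + 1 := ⟨n-1, by omega⟩
      rw [show n'+1-1 = n' by omega, show n'+1+1-1 = n'+1 by omega]
      rw [etaTrunc_succ 1 (n'+1), etaTrunc_succ 1 n']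
      ring_nf

lemma tt_natAbs (j : ℤ) : (j.natAbs : ℤ) ≤ (tt j : ℤ) + 1 := by
  have h := tt_two j
  rcases le_or_gt 0 j with hj | hj
  · rw [Int.natAbs_of_nonneg hj]; nlinarith
  · rw [Int.ofNat_natAbs_of_nonpos hj.le]; nlinarith

lemma tt_coe_nat (m : ℕ) : tt (m:ℤ) = m*(m+1)/2 := by
  have h := tt_two (m:ℤ)
  have h2 : ((m*(m+1):ℕ):ℤ) = (m:ℤ)*((m:ℤ)+1) := by push_cast; ring
  omega

lemma tt_ge_self (m : ℕ) : m ≤ tt (m:ℤ) := by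
  have h := tt_two (m:ℤ); nlinarith [h]

lemma tt_reflect (J : ℤ) : tt (-(J+1)) = tt J := by
  have h1 := tt_two (-(J+1)); have h2 := tt_two J
  have e : (-(J+1))*(-(J+1)+1) = J*(J+1) := by ring
  rw [e] at h1; omega

/-- constant coefficient of etaTrunc is 1 -/
lemma etaTrunc_const (k N : ℕ) (hk : k ≠ 0) : constantCoeff (R := ℤ) (etaTrunc k N) = 1 := by
  rw [etaTrunc, map_prod]
  refine Finset.prod_eq_one fun j _ => ?_
  simp [hk]

lemma etaTrunc_ne_zero (k N : ℕ) (hk : k ≠ 0) : etaTrunc k N ≠ 0 := fun h => by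
  have := etaTrunc_const k N hk; rw [h] at this; simp at this

/-- coefficient of a product of high-degree (1 - X^g) factors -/
lemma coeff_prod_high {ι : Type*} (s : Finset ι) (g : ι → ℕ) (e : ℕ)
    (hg : ∀ i ∈ s, e < g i) :
    coeff (R := ℤ) e (∏ i ∈ s, (1 - X ^ (g i))) = if e = 0 then 1 else 0 := by
  induction s using Finset.cons_induction with
  | empty =>
    rw [Finset.prod_empty, coeff_one]
  | cons i s his ih =>
    rw [Finset.prod_cons, sub_mul, one_mul, map_sub]
    have hXg : coeff (R := ℤ) e (X ^ (g i) * ∏ j ∈ s, (1 - X ^ g j)) = 0 := by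
      rw [mul_comm, coeff_mul_X_pow']
      rw [if_neg (by exact Nat.not_le.2 (hg i (Finset.mem_cons_self i s)))]
    rw [hXg, ih (fun j hj => hg j (Finset.mem_cons_of_mem hj)), sub_zero]

lemma etaTrunc_split (a b : ℕ) (h : a ≤ b) :
    etaTrunc 1 b = etaTrunc 1 a * ∏ j ∈ Ico a b, (1 - (X:PowerSeries ℤ)^(j+1)) := by
  rw [etaTrunc, etaTrunc]
  simp only [one_mul]
  rw [Finset.range_eq_Ico, Finset.range_eq_Ico]
  exact (Finset.prod_Ico_consecutive (fun j => (1 - (X:PowerSeries ℤ)^(j+1))) (Nat.zero_le a) h).symm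

lemma qbE (n m e : ℕ) (hm : m ≤ 2*n) (he : e ≤ min m (2*n - m)) (hen : e ≤ n) :
    coeff (R := ℤ) e (qb (2*n) (m:ℤ) * etaTrunc 1 n) = if e = 0 then 1 else 0 := by
  have hne : ∀ N, etaTrunc 1 N ≠ 0 := fun N => etaTrunc_ne_zero 1 N one_ne_zero
  rcases le_or_gt m n with hmn | hmn
  · -- m ≤ n
    have key := qb_prod (2*n) m hm
    have hsplit := etaTrunc_split (2*n-m) (2*n) (by omega)
    have hcan : qb (2*n) (m:ℤ) * etaTrunc 1 m = ∏ j ∈ Ico (2*n-m) (2*n), (1 - (X:PowerSeries ℤ)^(j+1)) := by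
      apply mul_left_cancel₀ (hne (2*n-m))
      calc etaTrunc 1 (2*n-m) * (qb (2*n) (m:ℤ) * etaTrunc 1 m)
          = qb (2*n) (m:ℤ) * etaTrunc 1 m * etaTrunc 1 (2*n-m) := by ring
        _ = etaTrunc 1 (2*n) := key
        _ = _ := hsplit
    have hEn : etaTrunc 1 n = etaTrunc 1 m * ∏ j ∈ Ico m n, (1 - (X:PowerSeries ℤ)^(j+1)) :=
      etaTrunc_split m n hmn
    have : qb (2*n) (m:ℤ) * etaTrunc 1 n =
        ∏ j ∈ Ico (2*n-m) (2*n) ∪ Ico m n, (1 - (X:PowerSeries ℤ)^(j+1)) := by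
      rw [Finset.prod_union (by
        rw [Finset.disjoint_left]
        intro x hx1 hx2
        rw [mem_Ico] at hx1 hx2
        omega)]
      rw [hEn, ← mul_assoc, hcan]
    rw [this]
    apply coeff_prod_high
    intro i hi
    rw [Finset.mem_union, mem_Ico, mem_Ico] at hi
    omega
  · -- n < m
    have key := qb_prod (2*n) m hm
    have hsplit := etaTrunc_split m (2*n) (by omega)
    have hcan : qb (2*n) (m:ℤ) * etaTrunc 1 (2*n-m) = ∏ j ∈ Ico m (2*n), (1 - (X:PowerSeries ℤ)^(j+1)) := by
      apply mul_left_cancel₀ (hne m)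
      calc etaTrunc 1 m * (qb (2*n) (m:ℤ) * etaTrunc 1 (2*n-m))
          = qb (2*n) (m:ℤ) * etaTrunc 1 m * etaTrunc 1 (2*n-m) := by ring
        _ = etaTrunc 1 (2*n) := key
        _ = _ := hsplit
    have hEn : etaTrunc 1 n = etaTrunc 1 (2*n-m) * ∏ j ∈ Ico (2*n-m) n, (1 - (X:PowerSeries ℤ)^(j+1)) :=
      etaTrunc_split (2*n-m) n (by omega)
    have : qb (2*n) (m:ℤ) * etaTrunc 1 n =
        ∏ j ∈ Ico m (2*n) ∪ Ico (2*n-m) n, (1 - (X:PowerSeries ℤ)^(j+1)) := by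
      rw [Finset.prod_union (by
        rw [Finset.disjoint_left]
        intro x hx1 hx2
        rw [mem_Ico] at hx1 hx2
        omega)]
      rw [hEn, ← mul_assoc, hcan]
    rw [this]
    apply coeff_prod_high
    intro i hi
    rw [Finset.mem_union, mem_Ico, mem_Ico] at hi
    omega

noncomputable def jac (d : ℕ) : ℤ :=
  ∑ m ∈ range (d+1), if tt (m:ℤ) = d then (-1:ℤ)^m * (2*m+1) else 0

lemma neg_one_pow_congr' (a b : ℕ) (h : a % 2 = b % 2) : (-1:ℤ)^a = (-1)^b := by
  rcases Nat.even_or_odd a with ha | ha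
  · have hb : Even b := by rw [Nat.even_iff] at *; omega
    rw [ha.neg_one_pow, hb.neg_one_pow]
  · have hb : Odd b := by rw [Nat.odd_iff] at *; omega
    rw [ha.neg_one_pow, hb.neg_one_pow]

lemma sumj (n d : ℕ) (hd : d < n) :
    ∑ m ∈ range (2*n+1), (-1:ℤ)^(m+n) * ((m:ℤ) - n) * (if tt ((m:ℤ)-n) = d then 1 else 0)
      = jac d := by
  rw [sum_range_succ]
  have htop : tt (((2*n:ℕ):ℤ) - n) = tt ((n:ℕ):ℤ) := by congr 1; push_cast; ring
  have h1 : (if tt (((2*n:ℕ):ℤ)-n) = d then (1:ℤ) else 0) = 0 := by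
    rw [if_neg]; rw [htop]; have := tt_ge_self n; omega
  rw [h1, mul_zero, add_zero, show 2*n = n+n by ring, Finset.sum_range_add]
  rw [← Finset.sum_range_reflect (fun m => (-1:ℤ)^(m+n) * ((m:ℤ) - n) * (if tt ((m:ℤ)-n) = d then 1 else 0)) n]
  rw [← Finset.sum_add_distrib]
  have per : ∀ J, J < n →
      ((-1:ℤ)^((n-1-J)+n) * (((n-1-J:ℕ):ℤ) - n) * (if tt (((n-1-J:ℕ):ℤ)-n) = d then 1 else 0)
      + (-1:ℤ)^((n+J)+n) * (((n+J:ℕ):ℤ) - n) * (if tt (((n+J:ℕ):ℤ)-n) = d then 1 else 0))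
      = (if tt ((J:ℕ):ℤ) = d then (-1:ℤ)^J * (2*J+1) else 0) := by
    intro J hJ
    have c1 : ((n-1-J:ℕ):ℤ) - n = -((J:ℤ)+1) := by push_cast; omega
    have c2 : ((n+J:ℕ):ℤ) - n = (J:ℤ) := by push_cast; ring
    have s1 : (-1:ℤ)^((n-1-J)+n) = (-1:ℤ)^(J+1) := by
      apply neg_one_pow_congr'; omega
    have s2 : (-1:ℤ)^((n+J)+n) = (-1:ℤ)^J := by
      apply neg_one_pow_congr'; omega
    rw [c1, c2, s1, s2, tt_reflect (J:ℤ)]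
    by_cases h : tt ((J:ℕ):ℤ) = d
    · rw [if_pos h, if_pos h]
      push_cast; ring
    · rw [if_neg h, if_neg h]
      ring
  rw [Finset.sum_congr rfl (fun J hJ => per J (mem_range.1 hJ))]
  -- now compare with jac
  rw [jac]
  rw [Finset.sum_subset (Finset.range_subset_range.2 (show n ≤ n+d+1 by omega))
    (fun x _ hx => by
      rw [if_neg]
      intro hc
      have h1 := tt_ge_self x
      rw [hc] at h1
      rw [mem_range] at *
      omega)]
  rw [← Finset.sum_subset (Finset.range_subset_range.2 (show d+1 ≤ n+d+1 by omega))
    (fun x _ hx => by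
      rw [if_neg]
      intro hc
      have h1 := tt_ge_self x
      rw [hc] at h1
      rw [mem_range] at *
      omega)]

lemma coeff_mul_one_sub_X_pow (f : PowerSeries ℤ) (k d : ℕ) (h : d < k) :
    coeff (R := ℤ) d (f * (1 - X^k)) = coeff (R := ℤ) d f := by
  rw [mul_sub, mul_one, map_sub, coeff_mul_X_pow', if_neg (by omega)]
  ring

theorem jacobi_coeff (n d : ℕ) (hd : d < n) :
    coeff (R := ℤ) d (etaTrunc 1 n ^ 3) = jac d := by
  obtain ⟨n', rfl⟩ : ∃ n', n = n' + 1 := ⟨n-1, by omega⟩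
  set n := n' + 1 with hn
  -- per-term coefficient computation
  have per : ∀ (c : ℤ) (m : ℕ), m < 2*n+1 →
      coeff (R := ℤ) d (C (R := ℤ) c * (qb (2*n) (m:ℤ) * etaTrunc 1 n * X ^ tt ((m:ℤ)-n)))
      = c * (if tt ((m:ℤ)-n) = d then 1 else 0) := by
    intro c m hm
    rw [coeff_C_mul, coeff_mul_X_pow']
    by_cases ht : tt ((m:ℤ)-n) ≤ d
    · rw [if_pos ht]
      have habs := tt_natAbs ((m:ℤ)-n)
      have he : d - tt ((m:ℤ)-n) ≤ min m (2*n - m) := by omega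
      have hen : d - tt ((m:ℤ)-n) ≤ n := by omega
      rw [qbE n m _ (by omega) he hen]
      by_cases hq : tt ((m:ℤ)-n) = d
      · rw [if_pos hq, if_pos (by omega)]
      · rw [if_neg hq, if_neg (by omega), mul_zero]
    · rw [if_neg ht, if_neg (by omega), mul_zero]
  have hVE : coeff (R := ℤ) d (Vj n * etaTrunc 1 n)
      = ∑ m ∈ range (2*n+1), (-1:ℤ)^m * m * (if tt ((m:ℤ)-n) = d then 1 else 0) := by
    rw [Vj, Gs, Finset.sum_mul, map_sum]
    refine Finset.sum_congr rfl fun m hm => ?_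
    have ec : (-1:PowerSeries ℤ)^m * ((m:ℕ):PowerSeries ℤ) * qb (2*n) (m:ℤ) * X ^ tt ((m:ℤ)-(n:ℕ)) * etaTrunc 1 n
        = C (R := ℤ) ((-1)^m * m) * (qb (2*n) (m:ℤ) * etaTrunc 1 n * X ^ tt ((m:ℤ)-n)) := by
      rw [map_mul, map_pow, map_neg, map_one, map_natCast]; ring
    rw [ec, per _ m (mem_range.1 hm)]
  have hUE : coeff (R := ℤ) d (Uj n * etaTrunc 1 n)
      = ∑ m ∈ range (2*n+1), (-1:ℤ)^m * (if tt ((m:ℤ)-n) = d then 1 else 0) := by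
    rw [Uj, Gs, Finset.sum_mul, map_sum]
    refine Finset.sum_congr rfl fun m hm => ?_
    have ec : (-1:PowerSeries ℤ)^m * 1 * qb (2*n) (m:ℤ) * X ^ tt ((m:ℤ)-(n:ℕ)) * etaTrunc 1 n
        = C (R := ℤ) ((-1)^m) * (qb (2*n) (m:ℤ) * etaTrunc 1 n * X ^ tt ((m:ℤ)-n)) := by
      rw [map_pow, map_neg, map_one]; ring
    rw [ec, per _ m (mem_range.1 hm)]
  have hU0 : (∑ m ∈ range (2*n+1), (-1:ℤ)^m * (if tt ((m:ℤ)-n) = d then 1 else 0)) = 0 := by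
    rw [← hUE, Uj_eq_zero n (by omega), zero_mul, map_zero]
  -- express E^3
  have hsplit : etaTrunc 1 n ^ 3 = (etaTrunc 1 n * ((-1:PowerSeries ℤ)^n * Vj n)) * (1 - X^n) := by
    rw [Vj_closed n (by omega)]
    have : etaTrunc 1 n = etaTrunc 1 n' * (1 - X^(1*(n'+1))) := etaTrunc_succ 1 n'
    calc etaTrunc 1 n ^ 3 = (etaTrunc 1 n * etaTrunc 1 n * etaTrunc 1 n') * (1 - X^(1*(n'+1))) := by
          rw [pow_succ, pow_two, mul_assoc (etaTrunc 1 n), mul_assoc, ← this]; ring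
      _ = (etaTrunc 1 n * ((-1:PowerSeries ℤ)^n * ((-1)^n * etaTrunc 1 n * etaTrunc 1 (n-1)))) * (1 - X^n) := by
          rw [show n - 1 = n' from rfl, show 1*(n'+1) = n by omega]
          have hsq : (-1:PowerSeries ℤ)^n * (-1:PowerSeries ℤ)^n = 1 := by
            rw [← pow_add]
            rcases Nat.even_or_odd (n+n) with h | h
            · exact h.neg_one_pow
            · exfalso; rw [Nat.odd_iff] at h; omega
          calc (etaTrunc 1 n * etaTrunc 1 n * etaTrunc 1 n') * (1 - X^n)
              = ((-1:PowerSeries ℤ)^n * (-1:PowerSeries ℤ)^n) * (etaTrunc 1 n * etaTrunc 1 n * etaTrunc 1 n') * (1 - X^n) := by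
                rw [hsq]; ring
            _ = _ := by ring
  rw [hsplit, coeff_mul_one_sub_X_pow _ _ _ hd]
  have e2 : etaTrunc 1 n * ((-1:PowerSeries ℤ)^n * Vj n) = C (R := ℤ) ((-1)^n) * (Vj n * etaTrunc 1 n) := by
    rw [map_pow, map_neg, map_one]; ring
  rw [e2, coeff_C_mul, hVE]
  -- assemble with sumj
  have key := sumj n d hd
  have expand : ∑ m ∈ range (2*n+1), (-1:ℤ)^(m+n) * ((m:ℤ) - n) * (if tt ((m:ℤ)-n) = d then 1 else 0)
      = (-1:ℤ)^n * (∑ m ∈ range (2*n+1), (-1:ℤ)^m * m * (if tt ((m:ℤ)-n) = d then 1 else 0))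
        - (-1:ℤ)^n * (n:ℤ) * (∑ m ∈ range (2*n+1), (-1:ℤ)^m * (if tt ((m:ℤ)-n) = d then 1 else 0)) := by
    rw [Finset.mul_sum, Finset.mul_sum, ← Finset.sum_sub_distrib]
    refine Finset.sum_congr rfl fun m hm => ?_
    rw [pow_add]
    ring
  rw [expand, hU0] at key
  linarith [key]

instance : Fact (Nat.Prime 5) := ⟨by norm_num⟩
instance : CharP (PowerSeries (ZMod 5)) 5 :=
  charP_of_injective_ringHom (f := PowerSeries.C (R := (ZMod 5)))
    (fun a b h => by simpa using congrArg (constantCoeff (R := (ZMod 5))) h) 5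

noncomputable abbrev pii : PowerSeries ℤ →+* PowerSeries (ZMod 5) :=
  PowerSeries.map (Int.castRingHom (ZMod 5))

lemma coeff_pii (f : PowerSeries ℤ) (i : ℕ) :
    coeff (R := (ZMod 5)) i (pii f) = ((coeff (R := ℤ) i f : ℤ) : ZMod 5) := by
  simp [PowerSeries.coeff_map]

/-- Frobenius on the truncated eta product -/
lemma frob (N : ℕ) :
    (pii (etaTrunc 1 N))^5 = ∏ j ∈ range N, (1 - (X : PowerSeries (ZMod 5))^(5*(j+1))) := by
  rw [etaTrunc, map_prod, ← Finset.prod_pow]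
  refine Finset.prod_congr rfl fun j _ => ?_
  rw [map_sub, map_one, map_pow, PowerSeries.map_X]
  rw [sub_pow_char]
  rw [one_pow, ← pow_mul, one_mul]
  congr 1
  ring

def Supp5 (φ : PowerSeries (ZMod 5)) : Prop :=
  ∀ i : ℕ, ¬ (5 ∣ i) → coeff (R := (ZMod 5)) i φ = 0

lemma supp5_prod (N : ℕ) : Supp5 (∏ j ∈ range N, (1 - (X : PowerSeries (ZMod 5))^(5*(j+1)))) := by
  induction N with
  | zero =>
    intro i hi
    rw [Finset.range_zero, Finset.prod_empty, coeff_one, if_neg (by omega)]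
  | succ N ih =>
    intro i hi
    rw [Finset.prod_range_succ, coeff_mul]
    apply Finset.sum_eq_zero
    intro p hp
    rw [Finset.HasAntidiagonal.mem_antidiagonal] at hp
    by_cases h5 : 5 ∣ p.1
    · have : ¬ 5 ∣ p.2 := by omega
      have : coeff (R := (ZMod 5)) p.2 (1 - X^(5*(N+1))) = 0 := by
        rw [map_sub, coeff_one, if_neg (by omega), coeff_X_pow, if_neg (by omega)]
        ring
      rw [this, mul_zero]
    · rw [ih p.1 h5, zero_mul]
lemma const_prod (N : ℕ) :
    constantCoeff (R := (ZMod 5)) (∏ j ∈ range N, (1 - (X : PowerSeries (ZMod 5))^(5*(j+1)))) = 1 := by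
  rw [map_prod]
  exact Finset.prod_eq_one fun j _ => by simp

/-- convolution along multiples of 5 -/
lemma conv (φ f : PowerSeries (ZMod 5)) (k : ℕ) (hs : Supp5 φ)
    (h1 : constantCoeff (R := (ZMod 5)) φ = 1) :
    coeff (R := (ZMod 5)) k (φ * f) = coeff (R := (ZMod 5)) k f +
      ∑ j ∈ range (k/5), coeff (R := (ZMod 5)) (5*(j+1)) φ * coeff (R := (ZMod 5)) (k - 5*(j+1)) f := by
  rw [coeff_mul, Finset.Nat.sum_antidiagonal_eq_sum_range_succ_mk]
  rw [← Finset.sum_filter_of_ne (p := fun i => 5 ∣ i)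
    (fun x hx hne => by
      by_contra hdvd
      exact hne (by rw [hs x hdvd, zero_mul]))]
  have himg : (range (k+1)).filter (fun i => 5 ∣ i) = (range (k/5+1)).image (fun j => 5*j) := by
    ext i
    simp only [Finset.mem_filter, Finset.mem_range, Finset.mem_image]
    constructor
    · rintro ⟨h1', ⟨j, rfl⟩⟩
      exact ⟨j, by omega, rfl⟩
    · rintro ⟨j, hj, rfl⟩
      exact ⟨by omega, ⟨j, rfl⟩⟩
  rw [himg, Finset.sum_image (fun a _ b _ h => by omega)]
  rw [Finset.sum_range_succ']
  simp only [Nat.mul_zero, Nat.sub_zero, mul_comm 5 _]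
  rw [← coeff_zero_eq_constantCoeff] at h1
  simp only [Nat.zero_mul, Nat.sub_zero, h1, one_mul]
  ring

lemma jac_sq (m i : ℕ) (h : tt (m:ℤ) = i) : ((2*m+1)^2 : ℤ) = 8*i+1 := by
  have h2 := tt_two (m:ℤ)
  rw [h] at h2
  push_cast
  push_cast at h2
  linear_combination (-4) * h2

lemma jac5 (i : ℕ) (h : i % 5 = 2 ∨ i % 5 = 3 ∨ i % 5 = 4) :
    ((jac i : ℤ) : ZMod 5) = 0 := by
  rw [jac, Int.cast_sum]
  apply Finset.sum_eq_zero
  intro m hm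
  by_cases htt : tt (m:ℤ) = i
  · rw [if_pos htt]
    have hsq := jac_sq m i htt
    have hx : (((2*m+1:ℤ)) : ZMod 5)^2 = 8*((i:ℕ) : ZMod 5)+1 := by
      have := congrArg (fun z : ℤ => (z : ZMod 5)) hsq
      push_cast at this ⊢
      linear_combination this
    have hi5 : ((i:ℕ) : ZMod 5) = ((i % 5 : ℕ) : ZMod 5) := (ZMod.natCast_mod i 5).symm
    rcases h with h | h | h
    · exfalso
      rw [hi5, h] at hx
      exact (by decide : ∀ x : ZMod 5, x^2 ≠ 8*((2:ℕ):ZMod 5)+1) _ hx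
    · have hx0 : (((2*m+1:ℤ)) : ZMod 5) = 0 := by
        rw [hi5, h] at hx
        exact (by decide : ∀ x : ZMod 5, x^2 = 8*((3:ℕ):ZMod 5)+1 → x = 0) _ hx
      push_cast
      push_cast at hx0
      rw [show ((2:ZMod 5)*m+1) = 0 from hx0]
      ring
    · exfalso
      rw [hi5, h] at hx
      exact (by decide : ∀ x : ZMod 5, x^2 ≠ 8*((4:ℕ):ZMod 5)+1) _ hx
  · rw [if_neg htt, Int.cast_zero]

lemma coeff6 (M k : ℕ) (hk : k < M) :
    coeff (R := ℤ) k (etaTrunc 1 M ^ 3 * etaTrunc 1 M ^ 3)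
      = ∑ i ∈ range (k+1), jac i * jac (k-i) := by
  rw [coeff_mul, Finset.Nat.sum_antidiagonal_eq_sum_range_succ_mk]
  refine Finset.sum_congr rfl fun i hi => ?_
  rw [mem_range] at hi
  rw [jacobi_coeff M i (by omega), jacobi_coeff M (k-i) (by omega)]

lemma eee (M : ℕ) : ∀ k, k < M → (k%5 = 3 ∨ k%5 = 4) →
    ((coeff (R := ℤ) k (etaTrunc 1 M) : ℤ) : ZMod 5) = 0 := by
  intro k
  induction k using Nat.strong_induction_on with
  | _ k IH =>
    intro hkM hk5
    -- cast of coeff of E^6 is zero via jac pairs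
    have hz : ((coeff (R := ℤ) k (etaTrunc 1 M ^ 3 * etaTrunc 1 M ^ 3) : ℤ) : ZMod 5) = 0 := by
      rw [coeff6 M k hkM, Int.cast_sum]
      apply Finset.sum_eq_zero
      intro i hi
      rw [mem_range] at hi
      rw [Int.cast_mul]
      rcases (by omega : i % 5 = 2 ∨ i % 5 = 3 ∨ i % 5 = 4 ∨ ((k-i) % 5 = 2 ∨ (k-i) % 5 = 3 ∨ (k-i) % 5 = 4)) with h | h | h | h
      · rw [jac5 i (by omega), zero_mul]
      · rw [jac5 i (by omega), zero_mul]
      · rw [jac5 i (by omega), zero_mul]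
      · rw [jac5 (k-i) h, mul_zero]
    -- via conv
    have hmap : ((coeff (R := ℤ) k (etaTrunc 1 M ^ 3 * etaTrunc 1 M ^ 3) : ℤ) : ZMod 5)
        = coeff (R := (ZMod 5)) k ((∏ j ∈ range M, (1 - (X : PowerSeries (ZMod 5))^(5*(j+1)))) * pii (etaTrunc 1 M)) := by
      rw [← coeff_pii]
      congr 1
      rw [show etaTrunc 1 M ^ 3 * etaTrunc 1 M ^ 3 = etaTrunc 1 M ^ 5 * etaTrunc 1 M by ring,
        map_mul, map_pow, frob]
    rw [hmap, conv _ _ _ (supp5_prod M) (const_prod M)] at hz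
    have hrest : ∑ j ∈ range (k/5), coeff (R := (ZMod 5)) (5*(j+1)) (∏ j ∈ range M, (1 - (X : PowerSeries (ZMod 5))^(5*(j+1)))) * coeff (R := (ZMod 5)) (k - 5*(j+1)) (pii (etaTrunc 1 M)) = 0 := by
      apply Finset.sum_eq_zero
      intro j hj
      rw [mem_range] at hj
      have h5j : 5*(j+1) ≤ k := by omega
      rw [coeff_pii, IH (k - 5*(j+1)) (by omega) (by omega) (by omega), mul_zero]
    rw [hrest, add_zero, coeff_pii] at hz
    exact hz

lemma main4 (t M : ℕ) (hM : 5*t+5 ≤ M) :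
    ((coeff (R := ℤ) (5*t+4) (etaTrunc 1 M ^ 4) : ℤ) : ZMod 5) = 0 := by
  rw [show etaTrunc 1 M ^ 4 = etaTrunc 1 M ^ 3 * etaTrunc 1 M by ring]
  rw [coeff_mul, Finset.Nat.sum_antidiagonal_eq_sum_range_succ_mk, Int.cast_sum]
  apply Finset.sum_eq_zero
  intro i hi
  rw [mem_range] at hi
  rw [Int.cast_mul, jacobi_coeff M i (by omega)]
  rcases (by omega : (5*t+4-i) % 5 = 3 ∨ (5*t+4-i) % 5 = 4 ∨ (i % 5 = 2 ∨ i % 5 = 3 ∨ i % 5 = 4)) with h | h | h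
  · rw [eee M (5*t+4-i) (by omega) (by omega), mul_zero]
  · rw [eee M (5*t+4-i) (by omega) (by omega), mul_zero]
  · rw [jac5 i h, zero_mul]


/-- doubling relation between power series -/
def IsDbl (a A : PowerSeries ℤ) : Prop :=
  (∀ m, coeff (R := ℤ) (2*m) A = coeff (R := ℤ) m a) ∧ (∀ m, coeff (R := ℤ) (2*m+1) A = 0)

lemma isDbl_one : IsDbl 1 1 := by
  constructor <;> intro m <;> rw [coeff_one]
  · rw [coeff_one]
    by_cases h : m = 0
    · subst h; norm_num
    · rw [if_neg (by omega), if_neg h]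
  · rw [if_neg (by omega)]

lemma isDbl_base (g : ℕ) : IsDbl (1 - X^g) (1 - X^(2*g)) := by
  constructor <;> intro m <;>
    rw [map_sub, coeff_one, coeff_X_pow]
  · rw [map_sub, coeff_one, coeff_X_pow]
    congr 1
    · by_cases h : m = 0
      · subst h; norm_num
      · rw [if_neg (by omega), if_neg h]
    · by_cases h : m = g
      · rw [if_pos (by omega), if_pos h]
      · rw [if_neg (by omega), if_neg h]
  · rw [if_neg (by omega), if_neg (by omega)]
    ring

lemma isDbl_mul {a A b B : PowerSeries ℤ} (hA : IsDbl a A) (hB : IsDbl b B) :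
    IsDbl (a*b) (A*B) := by
  constructor
  · intro m
    rw [coeff_mul, coeff_mul, Finset.Nat.sum_antidiagonal_eq_sum_range_succ_mk,
      Finset.Nat.sum_antidiagonal_eq_sum_range_succ_mk]
    rw [← Finset.sum_filter_of_ne (p := fun i => 2 ∣ i)
      (fun x hx hne => by
        by_contra hdvd
        obtain ⟨q, hq⟩ : ∃ q, x = 2*q+1 := ⟨x/2, by omega⟩
        exact hne (by rw [hq, hA.2 q, zero_mul]))]
    have himg : (range (2*m+1)).filter (fun i => 2 ∣ i) = (range (m+1)).image (fun j => 2*j) := by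
      ext i
      simp only [Finset.mem_filter, Finset.mem_range, Finset.mem_image]
      constructor
      · rintro ⟨h1', ⟨j, rfl⟩⟩
        exact ⟨j, by omega, rfl⟩
      · rintro ⟨j, hj, rfl⟩
        exact ⟨by omega, ⟨j, rfl⟩⟩
    rw [himg, Finset.sum_image (fun x _ y _ h => by omega)]
    refine Finset.sum_congr rfl fun i hi => ?_
    rw [mem_range] at hi
    rw [hA.1 i, show 2*m - 2*i = 2*(m-i) by omega, hB.1 (m-i)]
  · intro m
    rw [coeff_mul, Finset.Nat.sum_antidiagonal_eq_sum_range_succ_mk]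
    apply Finset.sum_eq_zero
    intro i hi
    rw [mem_range] at hi
    rcases Nat.even_or_odd i with he | ho
    · obtain ⟨q, rfl⟩ := he
      rw [show q+q = 2*q by omega] at *
      rw [show 2*m+1 - 2*q = 2*(m-q)+1 by omega, hB.2 (m-q), mul_zero]
    · obtain ⟨q, rfl⟩ := ho
      rw [hA.2 q, zero_mul]

lemma isDbl_pow {a A : PowerSeries ℤ} (h : IsDbl a A) (r : ℕ) : IsDbl (a^r) (A^r) := by
  induction r with
  | zero => simpa using isDbl_one
  | succ r ih => rw [pow_succ, pow_succ]; exact isDbl_mul ih h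

lemma isDbl_eta (N : ℕ) : IsDbl (etaTrunc 1 N) (etaTrunc 2 N) := by
  induction N with
  | zero => rw [etaTrunc_zero', etaTrunc_zero']; exact isDbl_one
  | succ N ih =>
    rw [etaTrunc_succ, etaTrunc_succ]
    have hb := isDbl_base (1*(N+1))
    rw [show 2*(1*(N+1)) = 2*(N+1) by ring] at hb
    exact isDbl_mul ih hb

theorem stmt_6 (a : ℕ → ℤ) (ha : IsGF 5 a) :
    ∀ n : ℕ, (5 : ℤ) ∣ a (5 * n + 3) := by
  have key : ∀ n : ℕ, ((a (5*n+3) : ℤ) : ZMod 5) = 0 := by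
    intro n
    induction n using Nat.strong_induction_on with
    | _ n IH =>
    have hgf := ha (5*n+3) (5*n+3) le_rfl
    have hL : ((coeff (R := ℤ) (5*n+3) (etaTrunc 1 (5*n+3) ^ 5 * PowerSeries.mk a) : ℤ) : ZMod 5)
        = ((a (5*n+3) : ℤ) : ZMod 5) := by
      rw [← coeff_pii, map_mul, map_pow, frob,
        conv _ _ _ (supp5_prod (5*n+3)) (const_prod (5*n+3))]
      have hrest : ∑ j ∈ range ((5*n+3)/5),
          coeff (R := (ZMod 5)) (5*(j+1)) (∏ j ∈ range (5*n+3), (1 - (X : PowerSeries (ZMod 5))^(5*(j+1)))) *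
          coeff (R := (ZMod 5)) (5*n+3 - 5*(j+1)) (pii (PowerSeries.mk a)) = 0 := by
        apply Finset.sum_eq_zero
        intro j hj
        rw [mem_range, show (5*n+3)/5 = n by omega] at hj
        rw [coeff_pii, coeff_mk, show 5*n+3 - 5*(j+1) = 5*(n-j-1)+3 by omega,
          IH (n-j-1) (by omega), mul_zero]
      rw [hrest, add_zero, coeff_pii, coeff_mk]
    have hR : ((coeff (R := ℤ) (5*n+3) (etaTrunc 2 (5*n+3) ^ (5-1)) : ℤ) : ZMod 5) = 0 := by
      rw [show (5-1 : ℕ) = 4 from rfl]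
      have hdbl := isDbl_pow (isDbl_eta (5*n+3)) 4
      rcases Nat.even_or_odd n with he | ho
      · obtain ⟨t, rfl⟩ := he
        rw [show 5*(t+t)+3 = 2*(5*t+1)+1 by omega] at hdbl ⊢
        rw [hdbl.2 (5*t+1)]
        norm_num
      · obtain ⟨t, rfl⟩ := ho
        rw [show 5*(2*t+1)+3 = 2*(5*t+4) by omega] at hdbl ⊢
        rw [hdbl.1 (5*t+4)]
        exact main4 t (2*(5*t+4)) (by omega)
    calc ((a (5*n+3) : ℤ) : ZMod 5)
        = ((coeff (R := ℤ) (5*n+3) (etaTrunc 1 (5*n+3) ^ 5 * PowerSeries.mk a) : ℤ) : ZMod 5) := hL.symm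
      _ = ((coeff (R := ℤ) (5*n+3) (etaTrunc 2 (5*n+3) ^ (5-1)) : ℤ) : ZMod 5) := by rw [hgf]
      _ = 0 := hR
  intro n
  exact (ZMod.intCast_zmod_eq_zero_iff_dvd _ 5).1 (key n)
end
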